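/- arXiv:1810.11638 — 10 statements merged into one kernel-verified Lean document; each statement's English description precedes it below -/
import Mathlib

section
/- Let R be a ring and M a class of right R-modules. If Z is a left R-module with Tor₁^R(M, Z) = 0 for all M in the class, and Y is a pure submodule of Z, then Tor₁^R(M, Y) = 0 for all M in the class. That is, the class of E_T^M-flat left R-modules is closed under pure submodules. -/
open CategoryTheory

/-- `Tor₁^R(M, N)`. -/
noncomputable abbrev tor1 {R : Type} [CommRing R] (M N : ModuleCat.{0} R) : ModuleCat R :=
  ((Tor (ModuleCat.{0} R) 1).obj M).obj N

namespace StmtAux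

open CategoryTheory.Limits MonoidalCategory HomologicalComplex

variable {R : Type} [CommRing R]

lemma flat_of_projective (F : ModuleCat.{0} R) [Projective F] : Module.Flat R F := by
  have : Module.Projective R F := (IsProjective.iff_projective (R := R) F).mpr
    (inferInstanceAs (Projective F))
  infer_instance

lemma moduleCat_shortExact (S : ShortComplex (ModuleCat.{0} R)) (h1 : Function.Injective S.f)
    (h2 : Function.Surjective S.g) (h3 : Function.Exact S.f S.g) : S.ShortExact :=
  { exact := (ShortComplex.ShortExact.moduleCat_exact_iff_function_exact S).mpr h3,
    mono_f := (ModuleCat.mono_iff_injective _).mpr h1,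
    epi_g := (ModuleCat.epi_iff_surjective _).mpr h2 }

/-- Naturality of `fromLeftDerivedZero'` in the functor variable. -/
lemma fromLDZ'_nat {C D : Type*} [Category C] [Category D] [Abelian C] [Abelian D]
    {X : C} (P : ProjectiveResolution X) {F G : C ⥤ D} [F.Additive] [G.Additive] (τ : F ⟶ G) :
    HomologicalComplex.opcyclesMap
        ((NatTrans.mapHomologicalComplex τ (ComplexShape.down ℕ)).app P.complex) 0 ≫
      P.fromLeftDerivedZero' G = P.fromLeftDerivedZero' F ≫ τ.app X := by
  rw [← cancel_epi (HomologicalComplex.pOpcycles _ 0), HomologicalComplex.p_opcyclesMap_assoc,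
    ProjectiveResolution.pOpcycles_comp_fromLeftDerivedZero',
    ProjectiveResolution.pOpcycles_comp_fromLeftDerivedZero'_assoc]
  exact (τ.naturality _).symm

/-- The key dimension-shifting lemma: given a short exact sequence
`0 → S → F → M → 0` with `F` projective, `Tor₁(M, N) = 0` iff `S ⊗ N → F ⊗ N`
is injective. -/
lemma tor1_subsingleton_iff (M : ModuleCat.{0} R) {S F : ModuleCat.{0} R}
    (ι : S ⟶ F) (π : F ⟶ M) (hw : ι ≫ π = 0)
    (hSE : (ShortComplex.mk ι π hw).ShortExact) [Projective F]
    (N : ModuleCat.{0} R) :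
    Subsingleton (tor1 M N) ↔ Function.Injective (LinearMap.rTensor N ι.hom) := by
  classical
  let P := projectiveResolution N
  let TS := (tensoringLeft (ModuleCat.{0} R)).obj S
  let TF := (tensoringLeft (ModuleCat.{0} R)).obj F
  let TM := (tensoringLeft (ModuleCat.{0} R)).obj M
  let α := (NatTrans.mapHomologicalComplex ((tensoringLeft (ModuleCat.{0} R)).map ι)
    (ComplexShape.down ℕ)).app P.complex
  let β := (NatTrans.mapHomologicalComplex ((tensoringLeft (ModuleCat.{0} R)).map π)
    (ComplexShape.down ℕ)).app P.complex
  have hι : Function.Injective ι := (ModuleCat.mono_iff_injective _).mp hSE.mono_f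
  have hπ : Function.Surjective π := (ModuleCat.epi_iff_surjective _).mp hSE.epi_g
  have hexact : Function.Exact ι π :=
    (ShortComplex.ShortExact.moduleCat_exact_iff_function_exact _).mp hSE.exact
  have hπι : π.hom.comp ι.hom = 0 := by
    have := congrArg ModuleCat.Hom.hom hw
    simpa using this
  have hw' : α ≫ β = 0 := by
    ext i : 1
    rw [HomologicalComplex.comp_f, HomologicalComplex.zero_f]
    apply ModuleCat.hom_ext
    show (LinearMap.rTensor (P.complex.X i) π.hom).comp (LinearMap.rTensor (P.complex.X i) ι.hom) = 0
    rw [← LinearMap.rTensor_comp, hπι, LinearMap.rTensor_zero]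
  let SC : ShortComplex (HomologicalComplex (ModuleCat.{0} R) (ComplexShape.down ℕ)) :=
    ShortComplex.mk α β hw'
  have hdeg : ∀ i, (SC.map (HomologicalComplex.eval _ _ i)).ShortExact := by
    intro i
    have : Module.Flat R (P.complex.X i) := flat_of_projective _
    exact moduleCat_shortExact _
      (Module.Flat.rTensor_preserves_injective_linearMap (M := P.complex.X i) ι.hom hι)
      (LinearMap.rTensor_surjective _ hπ)
      (rTensor_exact _ hexact hπ)
  have hSES : SC.ShortExact := HomologicalComplex.shortExact_of_degreewise_shortExact _ hdeg
  -- `H₁` of the middle column vanishes since `F` is flat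
  have hH1F : IsZero (SC.X₂.homology 1) := by
    rw [← HomologicalComplex.exactAt_iff_isZero_homology]
    rw [HomologicalComplex.exactAt_iff' _ 2 1 0 (by simp) (by simp)]
    have hPe : Function.Exact (P.complex.d 2 1) (P.complex.d 1 0) := by
      have h := P.complex_exactAt_succ 0
      rw [HomologicalComplex.exactAt_iff' _ 2 1 0 (by simp) (by simp)] at h
      exact (ShortComplex.ShortExact.moduleCat_exact_iff_function_exact _).mp h
    have : Module.Flat R F := flat_of_projective F
    refine (ShortComplex.ShortExact.moduleCat_exact_iff_function_exact _).mpr ?_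
    exact Module.Flat.lTensor_exact (M := F) hPe
  have hrel : (ComplexShape.down ℕ).Rel 1 0 := by simp
  have h3 := hSES.homology_exact₃ 1 0 hrel
  have h1 := hSES.homology_exact₁ 1 0 hrel
  have hmonoδ : Mono (hSES.δ 1 0 hrel) :=
    h3.mono_g (hH1F.eq_of_src _ _)
  -- identify the `H₀` map with `rTensor N ι`
  haveI : PreservesColimits TS := inferInstanceAs (PreservesColimits (tensorLeft S))
  haveI : PreservesColimits TF := inferInstanceAs (PreservesColimits (tensorLeft F))
  let eS : SC.X₁.homology 0 ≅ TS.obj N :=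
    (ChainComplex.isoHomologyι₀ _) ≪≫ asIso (P.fromLeftDerivedZero' TS)
  let eF : SC.X₂.homology 0 ≅ TF.obj N :=
    (ChainComplex.isoHomologyι₀ _) ≪≫ asIso (P.fromLeftDerivedZero' TF)
  have hsq : HomologicalComplex.homologyMap α 0 ≫ eF.hom =
      eS.hom ≫ ((tensoringLeft (ModuleCat.{0} R)).map ι).app N := by
    show HomologicalComplex.homologyMap α 0 ≫
        (SC.X₂.homologyι 0 ≫ P.fromLeftDerivedZero' TF) =
      (SC.X₁.homologyι 0 ≫ P.fromLeftDerivedZero' TS) ≫ _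
    rw [HomologicalComplex.homologyι_naturality_assoc]
    rw [Category.assoc, fromLDZ'_nat]
  have hα0 : HomologicalComplex.homologyMap α 0 =
      eS.hom ≫ ((tensoringLeft (ModuleCat.{0} R)).map ι).app N ≫ eF.inv := by
    rw [← Category.assoc, ← hsq, Category.assoc, Iso.hom_inv_id, Category.comp_id]
  have keyMono : Mono (HomologicalComplex.homologyMap α 0) ↔
      Function.Injective (LinearMap.rTensor N ι.hom) := by
    rw [hα0]
    have base : Mono (((tensoringLeft (ModuleCat.{0} R)).map ι).app N) ↔
        Function.Injective (LinearMap.rTensor N ι.hom) :=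
      ModuleCat.mono_iff_injective (((tensoringLeft (ModuleCat.{0} R)).map ι).app N)
    rw [← base]
    constructor
    · intro h
      have h2 : Mono (eS.inv ≫ (eS.hom ≫ ((tensoringLeft (ModuleCat.{0} R)).map ι).app N ≫
          eF.inv) ≫ eF.hom) := mono_comp _ _
      simpa using h2
    · intro h
      infer_instance
  -- identify `Tor₁` with `H₁` of the third column
  let eTor : tor1 M N ≅ HomologicalComplex.homology
      ((TM.mapHomologicalComplex (ComplexShape.down ℕ)).obj P.complex) 1 :=
    P.isoLeftDerivedObj TM 1
  constructor
  · intro hsub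
    have hzero : IsZero (SC.X₃.homology 1) :=
      (ModuleCat.isZero_of_subsingleton (tor1 M N)).of_iso eTor.symm
    have hδ0 : hSES.δ 1 0 hrel = 0 := hzero.eq_of_src _ _
    exact keyMono.mp (h1.mono_g hδ0)
  · intro hinj
    haveI : Mono (HomologicalComplex.homologyMap α 0) := keyMono.mpr hinj
    have hδ0 : hSES.δ 1 0 hrel = 0 :=
      zero_of_comp_mono _ (hSES.δ_comp 1 0 hrel)
    have hzero : IsZero (SC.X₃.homology 1) := IsZero.of_mono_eq_zero _ hδ0
    have hz : IsZero (tor1 M N) := hzero.of_iso eTor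
    have : Subsingleton (tor1 M N) := by
      have e := hz.iso (ModuleCat.isZero_of_subsingleton (ModuleCat.of R PUnit))
      have : Function.Injective e.hom := (ModuleCat.mono_iff_injective _).mp inferInstance
      exact this.subsingleton
    exact this

end StmtAux

/- STATEMENT 2: If `Tor₁(M, Z) = 0` for all `M` in a class `𝓜` and `Y` is a pure
submodule of `Z`, then `Tor₁(M, Y) = 0` for all `M` in the class. -/
theorem stmt2 (R : Type) [CommRing R] (𝓜 : ModuleCat.{0} R → Prop)
    (Z : Type) [AddCommGroup Z] [Module R Z]
    (hZ : ∀ M : ModuleCat.{0} R, 𝓜 M → Subsingleton (tor1 M (ModuleCat.of R Z)))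
    (Y : Submodule R Z)
    (hpure : ∀ (N : Type) [AddCommGroup N] [Module R N],
      Function.Injective (LinearMap.lTensor N Y.subtype)) :
    ∀ M : ModuleCat.{0} R, 𝓜 M → Subsingleton (tor1 M (ModuleCat.of R Y)) := by
  intro M hM
  classical
  -- a projective presentation `0 → S0 → F0 → M → 0` of `M`
  let F0 : ModuleCat.{0} R := ModuleCat.of R (↥M →₀ R)
  let plin : (↥M →₀ R) →ₗ[R] ↥M := Finsupp.linearCombination R (id : ↥M → ↥M)
  let p : F0 ⟶ M := ModuleCat.ofHom plin
  have hp : Function.Surjective p := Finsupp.linearCombination_id_surjective (R := R) ↥M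
  let S0 : ModuleCat.{0} R := ModuleCat.of R ↥(LinearMap.ker plin)
  let ι0 : S0 ⟶ F0 := ModuleCat.ofHom (LinearMap.ker plin).subtype
  have hw : ι0 ≫ p = 0 := by
    apply ModuleCat.hom_ext
    apply LinearMap.ext
    rintro ⟨x, hx⟩
    exact hx
  have hSE : (ShortComplex.mk ι0 p hw).ShortExact :=
    StmtAux.moduleCat_shortExact _ (Submodule.injective_subtype (LinearMap.ker plin)) hp
      (LinearMap.exact_subtype_ker_map plin)
  haveI : Projective F0 :=
    (IsProjective.iff_projective (R := R) (↥M →₀ R)).mp inferInstance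
  -- `S0 ⊗ Z → F0 ⊗ Z` is injective since `Tor₁(M, Z) = 0`
  have hZinj : Function.Injective (LinearMap.rTensor (ModuleCat.of R Z) ι0.hom) :=
    (StmtAux.tor1_subsingleton_iff M ι0 p hw hSE (ModuleCat.of R Z)).mp (hZ M hM)
  -- purity diagram chase: `S0 ⊗ Y → F0 ⊗ Y` is injective
  have h2 : Function.Injective (LinearMap.rTensor (ModuleCat.of R ↥Y) ι0.hom) := by
    have hfact : (LinearMap.lTensor F0 Y.subtype).comp
          (LinearMap.rTensor (↥Y) ι0.hom)
        = (LinearMap.rTensor Z ι0.hom).comp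
          (LinearMap.lTensor S0 Y.subtype) := by
      rw [LinearMap.lTensor_comp_rTensor, LinearMap.rTensor_comp_lTensor]
    have hinjcomp : Function.Injective
        ((LinearMap.lTensor F0 Y.subtype).comp
          (LinearMap.rTensor (↥Y) ι0.hom)) := by
      rw [hfact, LinearMap.coe_comp]
      exact Function.Injective.comp hZinj (hpure S0)
    rw [LinearMap.coe_comp] at hinjcomp
    exact Function.Injective.of_comp hinjcomp
  exact (StmtAux.tor1_subsingleton_iff M ι0 p hw hSE (ModuleCat.of R ↥Y)).mpr h2
end

section
/- Let R be a ring and M a finitely generated right R-module. Then M is FP-projective if and only if M is finitely presented. -/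
open CategoryTheory

/-- `Ext¹_R(M, N)` as an object of `ModuleCat ℤ`. -/
noncomputable abbrev ext1 {R : Type} [Ring R] (M N : ModuleCat.{0} R) : ModuleCat ℤ :=
  ((Ext ℤ (ModuleCat.{0} R) 1).obj (Opposite.op M)).obj N

/-- A module `X` is absolutely pure if `Ext¹(F, X) = 0` for every finitely presented `F`. -/
def AbsolutelyPure {R : Type} [Ring R] (X : ModuleCat.{0} R) : Prop :=
  ∀ F : ModuleCat.{0} R, Module.FinitePresentation R F → Subsingleton (ext1 F X)

/-- A module `Z` is FP-projective if `Ext¹(Z, X) = 0` for every absolutely pure `X`. -/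
def FPProjective {R : Type} [Ring R] (Z : ModuleCat.{0} R) : Prop :=
  ∀ X : ModuleCat.{0} R, AbsolutelyPure X → Subsingleton (ext1 Z X)

open CategoryTheory Limits

noncomputable section

namespace FPAux

universe v u
variable {C : Type u} [Category.{v} C] [Abelian C] [EnoughProjectives C]

/-- analogue of `ProjectiveResolution.ofComplex` starting from a chosen epi `p : F ⟶ Z`. -/
def resComplex {Z F : C} (p : F ⟶ Z) : ChainComplex C ℕ :=
  ChainComplex.mk' F (Projective.syzygies p) (Projective.d p)
    (fun f => ⟨_, Projective.d f, by
      exact (Category.assoc _ _ _).trans ((congrArg _ (kernel.condition _)).trans comp_zero)⟩)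

lemma resComplex_d_1_0 {Z F : C} (p : F ⟶ Z) :
    (resComplex p).d 1 0 = Projective.d p := by
  simp [resComplex]

lemma resComplex_exactAt_succ {Z F : C} (p : F ⟶ Z) (n : ℕ) :
    (resComplex p).ExactAt (n + 1) := by
  rw [HomologicalComplex.exactAt_iff' _ (n + 1 + 1) (n + 1) n (by simp) (by simp)]
  dsimp [resComplex, HomologicalComplex.sc', HomologicalComplex.shortComplexFunctor',
      ChainComplex.mk', ChainComplex.mk]
  match n with
  | 0 =>
    refine ShortComplex.exact_of_iso ?_ (CategoryTheory.exact_d_f (Projective.d p))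
    exact ShortComplex.isoMk (Iso.refl _) (Iso.refl _) (Iso.refl _)
      (by simp only [Iso.refl_hom]; erw [Category.id_comp, Category.comp_id, ChainComplex.of_d]; rfl) (by simp only [Iso.refl_hom]; erw [Category.id_comp, Category.comp_id, ChainComplex.of_d]; rfl)
  | n + 1 =>
    refine ShortComplex.exact_of_iso ?_ (CategoryTheory.exact_d_f (ChainComplex.mkAux F (Projective.syzygies p)
        (Projective.syzygies (Projective.d p)) (Projective.d p) (Projective.d (Projective.d p))
        ((Category.assoc _ _ _).trans ((congrArg _ (kernel.condition _)).trans comp_zero))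
        (fun S => ⟨Projective.syzygies S.f, Projective.d S.f,
          (Category.assoc _ _ _).trans ((congrArg _ (kernel.condition _)).trans comp_zero)⟩) n).f)
    exact ShortComplex.isoMk (Iso.refl _) (Iso.refl _) (Iso.refl _)
      (by simp only [Iso.refl_hom]; erw [Category.id_comp, Category.comp_id, ChainComplex.of_d]; rfl) (by simp only [Iso.refl_hom]; erw [Category.id_comp, Category.comp_id, ChainComplex.of_d]; rfl)

instance resComplex_projective {Z F : C} (p : F ⟶ Z) [Projective F] (n : ℕ) :
    Projective ((resComplex p).X n) := by
  obtain (_ | _ | _ | n) := n <;> first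
    | (exact (inferInstance : Projective F))
    | apply Projective.projective_over

/-- analogue of `ProjectiveResolution.of` with chosen degree-0 epi. -/
def res {Z F : C} (p : F ⟶ Z) [Projective F] [Epi p] : ProjectiveResolution Z where
  complex := resComplex p
  π := (ChainComplex.toSingle₀Equiv _ _).symm ⟨p, by
          rw [resComplex_d_1_0]
          exact (Category.assoc _ _ _).trans ((congrArg _ (kernel.condition _)).trans comp_zero)⟩
  quasiIso := ⟨fun n => by
    cases n
    · rw [ChainComplex.quasiIsoAt₀_iff, ShortComplex.quasiIso_iff_of_zeros']
      · refine (ShortComplex.exact_and_epi_g_iff_of_iso ?_).2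
          ⟨CategoryTheory.exact_d_f p, by dsimp; infer_instance⟩
        exact ShortComplex.isoMk (Iso.refl _) (Iso.refl _) (Iso.refl _)
          (by simp only [Iso.refl_hom]; erw [Category.id_comp, Category.comp_id]; exact (resComplex_d_1_0 p).symm)
          (by simp only [Iso.refl_hom]; erw [Category.id_comp, Category.comp_id]; exact (ChainComplex.toSingle₀Equiv_symm_apply_f_zero (C := resComplex p) (X := Z) p _).symm)
      all_goals rfl
    · rw [quasiIsoAt_iff_exactAt']
      · apply resComplex_exactAt_succ
      · apply ChainComplex.exactAt_succ_single_obj⟩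

end FPAux

section
variable {R : Type} [Ring R]

lemma exists_factor {A B X : Type} [AddCommGroup A] [Module R A] [AddCommGroup B] [Module R B]
    [AddCommGroup X] [Module R X] (q : A →ₗ[R] B) (hq : Function.Surjective q)
    (g : A →ₗ[R] X) (h : ∀ a, q a = 0 → g a = 0) :
    ∃ φ : B →ₗ[R] X, ∀ a, φ (q a) = g a := by
  have hle : LinearMap.ker q ≤ LinearMap.ker g := fun a ha => h a ha
  refine ⟨(LinearMap.ker q).liftQ g hle ∘ₗ
      ((LinearMap.quotKerEquivOfSurjective q hq).symm : B →ₗ[R] (A ⧸ LinearMap.ker q)), fun a => ?_⟩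
  have h1 : (LinearMap.quotKerEquivOfSurjective q hq).symm (q a) = Submodule.Quotient.mk a := by
    apply (LinearMap.quotKerEquivOfSurjective q hq).injective
    simp [LinearMap.quotKerEquivOfSurjective]
  simp [h1]

lemma subsingleton_ext1_iff {F Z X : ModuleCat.{0} R} (p : F ⟶ Z) [Projective F] [Epi p] :
    Subsingleton (ext1 Z X) ↔
      ∀ φ : ↥(LinearMap.ker p.hom) →ₗ[R] ↥X, ∃ ψ : F ⟶ X,
        ∀ k : ↥(LinearMap.ker p.hom), ψ k.1 = φ k := by
  classical
  let P : ProjectiveResolution Z := FPAux.res p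
  have e := P.isoExt (R := ℤ) 1 X
  have h1 : Subsingleton (ext1 Z X) ↔ Subsingleton ((P.complex.linearYonedaObj ℤ X).homology 1) :=
    Equiv.subsingleton_congr ((forget _).mapIso e).toEquiv
  have h2 : Subsingleton ((P.complex.linearYonedaObj ℤ X).homology 1) ↔
      (P.complex.linearYonedaObj ℤ X).ExactAt 1 := by
    rw [HomologicalComplex.exactAt_iff_isZero_homology]
    constructor
    · intro h; exact ModuleCat.isZero_of_subsingleton _
    · intro h
      refine ⟨fun a b => ?_⟩
      have hid : 𝟙 ((P.complex.linearYonedaObj ℤ X).homology 1) = 0 := h.eq_of_src _ _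
      calc a = (𝟙 ((P.complex.linearYonedaObj ℤ X).homology 1)) a := rfl
        _ = (0 : _ →ₗ[ℤ] _) a := by rw [hid]; rfl
        _ = 0 := rfl
        _ = b := by
          have : b = (𝟙 ((P.complex.linearYonedaObj ℤ X).homology 1)) b := rfl
          rw [this, hid]; rfl
  have h3 : (P.complex.linearYonedaObj ℤ X).ExactAt 1 ↔
      ((P.complex.linearYonedaObj ℤ X).sc' 0 1 2).Exact :=
    HomologicalComplex.exactAt_iff' _ 0 1 2 (by simp) (by simp)
  have h4 := ((P.complex.linearYonedaObj ℤ X).sc' 0 1 2).moduleCat_exact_iff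
  rw [h1, h2, h3, h4]
  -- now elementwise
  have hd10 : P.complex.d 1 0 = Projective.π (Limits.kernel p) ≫ Limits.kernel.ι p :=
    FPAux.resComplex_d_1_0 p
  have hd21 : P.complex.d 2 1 ≫ Projective.π (Limits.kernel p) = 0 := by
    rw [← cancel_mono (Limits.kernel.ι p)]
    have := P.complex.d_comp_d 2 1 0
    rw [hd10] at this
    exact (Category.assoc _ _ _).trans (this.trans zero_comp.symm)
  have ka := ModuleCat.kernelIsoKer p
  have hka : (ModuleCat.kernelIsoKer p).hom ≫ ModuleCat.ofHom (LinearMap.ker p.hom).subtype = Limits.kernel.ι p :=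
    ModuleCat.kernelIsoKer_hom_ker_subtype p
  set π₁ : P.complex.X 1 ⟶ Limits.kernel p := Projective.π (Limits.kernel p) with hπ₁
  have hπ₁surj : Function.Surjective (π₁ ≫ (ModuleCat.kernelIsoKer p).hom) := by
    rw [← ModuleCat.epi_iff_surjective]
    exact epi_comp' (Projective.π_epi _) inferInstance
  have hscg : ∀ x : (P.complex.X 1 ⟶ X), ((P.complex.linearYonedaObj ℤ X).sc' 0 1 2).g x = P.complex.d 2 1 ≫ x := by
    intro x
    simp [HomologicalComplex.sc', HomologicalComplex.shortComplexFunctor',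
      ChainComplex.linearYonedaObj_d]
    rfl
  have hscf : ∀ x : (P.complex.X 0 ⟶ X), ((P.complex.linearYonedaObj ℤ X).sc' 0 1 2).f x = P.complex.d 1 0 ≫ x := by
    intro x
    simp [HomologicalComplex.sc', HomologicalComplex.shortComplexFunctor',
      ChainComplex.linearYonedaObj_d]
    rfl
  constructor
  · intro hE φ
    set φm : ModuleCat.of R ↥(LinearMap.ker p.hom) ⟶ X := ModuleCat.ofHom φ with hφm
    set g : P.complex.X 1 ⟶ X := π₁ ≫ (ModuleCat.kernelIsoKer p).hom ≫ φm with hg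
    obtain ⟨h, hh⟩ := hE g (by
      rw [hscg, hg, ← Category.assoc, hd21, Limits.zero_comp]; rfl)
    change F ⟶ X at h
    replace hh : P.complex.d 1 0 ≫ h = g := (hscf h).symm.trans hh
    haveI : Epi π₁ := Projective.π_epi _
    have hcomm : Limits.kernel.ι p ≫ h = (ModuleCat.kernelIsoKer p).hom ≫ φm := by
      rw [← cancel_epi π₁, ← Category.assoc]
      exact (congrArg (fun f => f ≫ h) hd10.symm).trans (hh.trans hg)
    have hsub : ModuleCat.ofHom (LinearMap.ker p.hom).subtype ≫ h = φm := by
      erw [← ModuleCat.kernelIsoKer_inv_kernel_ι p, Category.assoc, hcomm, ← Category.assoc,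
        Iso.inv_hom_id, Category.id_comp]
    exact ⟨h, fun k => by simpa [hφm] using LinearMap.congr_fun (congrArg ModuleCat.Hom.hom hsub) k⟩
  · intro hext g₀ hg₀
    let g : P.complex.X 1 ⟶ X := g₀
    have hg : P.complex.d 2 1 ≫ g = 0 := by rw [← hscg]; exact hg₀
    have hkainj : Function.Injective (ModuleCat.kernelIsoKer p).hom :=
      (ModuleCat.mono_iff_injective _).mp inferInstance
    have hre := FPAux.resComplex_exactAt_succ p 0
    rw [HomologicalComplex.exactAt_iff' _ 2 1 0 (by simp) (by simp),
      ShortComplex.moduleCat_exact_iff] at hre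
    have hker : ∀ y, (π₁ ≫ (ModuleCat.kernelIsoKer p).hom) y = 0 → g y = 0 := by
      intro y hy
      have hy1 : π₁ y = 0 := by
        apply hkainj
        simpa using hy
      have hy2 : P.complex.d 1 0 y = 0 := by
        have h5 : P.complex.d 1 0 y = Limits.kernel.ι p (π₁ y) := by
          rw [hd10]; rfl
        rw [h5, hy1, map_zero]; rfl
      obtain ⟨z, hz⟩ := hre y hy2
      have h6 : g y = (P.complex.d 2 1 ≫ g) (z : (P.complex.X 2)) := congrArg g hz.symm
      rw [h6, hg]
      rfl
    obtain ⟨φ, hφ⟩ := exists_factor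
      ((π₁ ≫ (ModuleCat.kernelIsoKer p).hom : _ ⟶ _).hom : _ →ₗ[R] ↥(LinearMap.ker p.hom))
      hπ₁surj (g.hom : _ →ₗ[R] _) hker
    obtain ⟨ψ, hψ⟩ := hext φ
    refine ⟨ψ, ?_⟩
    refine (hscf ψ).trans ?_
    show P.complex.d 1 0 ≫ ψ = g
    ext y
    have h1 : (P.complex.d 1 0 ≫ ψ) y = ψ (Limits.kernel.ι p (π₁ y)) := by
      rw [hd10]; rfl
    have h2 : Limits.kernel.ι p (π₁ y) = ((ModuleCat.kernelIsoKer p).hom (π₁ y)).1 :=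
      (LinearMap.congr_fun (congrArg ModuleCat.Hom.hom (ModuleCat.kernelIsoKer_hom_ker_subtype p)) (π₁ y)).symm
    have h3 := hψ ((ModuleCat.kernelIsoKer p).hom (π₁ y))
    have h4 := hφ y
    calc (P.complex.d 1 0 ≫ ψ) y
        = ψ (Limits.kernel.ι p (π₁ y)) := h1
      _ = φ ((ModuleCat.kernelIsoKer p).hom (π₁ y)) := by rw [h2]; exact h3
      _ = g y := h4


/-- FG submodules of `Km`. -/
abbrev Lam (Km : ModuleCat.{0} R) := {S : Submodule R ↥Km // S.FG}

/-- Chosen injective module containing `Km ⧸ S`. -/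
noncomputable abbrev Efun (Km : ModuleCat.{0} R) (S : Lam Km) : ModuleCat.{0} R :=
  Injective.under (ModuleCat.of R (↥Km ⧸ S.1))

/-- The "eventually zero" submodule of the product. -/
def Xsub (Km : ModuleCat.{0} R) : Submodule R (∀ S : Lam Km, ↥(Efun Km S)) where
  carrier := {x | ∃ S₀ : Lam Km, ∀ S : Lam Km, S₀.1 ≤ S.1 → x S = 0}
  add_mem' := by
    rintro a b ⟨Sa, ha⟩ ⟨Sb, hb⟩
    exact ⟨⟨Sa.1 ⊔ Sb.1, Sa.2.sup Sb.2⟩, fun S hS => by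
      rw [Pi.add_apply, ha S (le_trans le_sup_left hS), hb S (le_trans le_sup_right hS), add_zero]⟩
  zero_mem' := ⟨⟨⊥, Submodule.fg_bot⟩, fun S _ => rfl⟩
  smul_mem' := by
    rintro r a ⟨Sa, ha⟩
    exact ⟨Sa, fun S hS => by rw [Pi.smul_apply, ha S hS, smul_zero]⟩

lemma absPure (Km : ModuleCat.{0} R) (F' : ModuleCat.{0} R)
    (hF' : Module.FinitePresentation R ↥F') :
    Subsingleton (ext1 F' (ModuleCat.of R ↥(Xsub Km))) := by
  classical
  haveI := hF'
  obtain ⟨m, q, hq⟩ := Module.Finite.exists_fin' R ↥F'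
  let qm : ModuleCat.of R (Fin m → R) ⟶ F' := ModuleCat.ofHom q
  haveI : Projective (ModuleCat.of R (Fin m → R)) :=
    ModuleCat.projective_of_free (Pi.basisFun R (Fin m))
  haveI : Epi qm := (ModuleCat.epi_iff_surjective qm).mpr hq
  rw [subsingleton_ext1_iff qm]
  intro φ
  have hker : (LinearMap.ker qm.hom).FG := Module.FinitePresentation.fg_ker q hq
  obtain ⟨s, hs⟩ := hker
  let bnd : ↥(Xsub Km) → Lam Km := fun x => x.2.choose
  have hbnd : ∀ x : ↥(Xsub Km), ∀ S : Lam Km, (bnd x).1 ≤ S.1 → x.1 S = 0 :=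
    fun x => x.2.choose_spec
  let S₀ : Submodule R ↥Km := s.attach.sup
    (fun g => (bnd (φ ⟨g.1, by rw [← hs]; exact Submodule.subset_span g.2⟩)).1)
  have hS₀fg : S₀.FG := Submodule.fg_finset_sup _ _ (fun g _ => (bnd _).2)
  let S₀Λ : Lam Km := ⟨S₀, hS₀fg⟩
  have hvanish : ∀ t : ↥(LinearMap.ker qm.hom), ∀ S : Lam Km, S₀ ≤ S.1 → (φ t).1 S = 0 := by
    have main : ∀ v (hv : v ∈ Submodule.span R (s : Set ↥(ModuleCat.of R (Fin m → R)))), ∀ S : Lam Km, S₀ ≤ S.1 →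
        (φ ⟨v, by rw [← hs]; exact hv⟩).1 S = 0 := by
      intro v hv
      induction hv using Submodule.span_induction with
      | mem x hx =>
        intro S hS
        refine hbnd (φ ⟨x, by rw [← hs]; exact Submodule.subset_span hx⟩) S (le_trans ?_ hS)
        exact Finset.le_sup (f := fun g : {x // x ∈ s} =>
          (bnd (φ ⟨g.1, by rw [← hs]; exact Submodule.subset_span g.2⟩)).1)
          (Finset.mem_attach s ⟨x, Finset.mem_coe.mp hx⟩)
      | zero =>
        intro S hS
        have : (⟨0, by rw [← hs]; exact Submodule.zero_mem _⟩ : ↥(LinearMap.ker qm.hom)) = 0 := rfl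
        rw [this, map_zero]
        rfl
      | add x y hx hy ihx ihy =>
        intro S hS
        have : (⟨x + y, by rw [← hs]; exact Submodule.add_mem _ hx hy⟩ : ↥(LinearMap.ker qm.hom))
            = ⟨x, by rw [← hs]; exact hx⟩ + ⟨y, by rw [← hs]; exact hy⟩ := rfl
        rw [this, map_add]
        show (φ _).1 S + (φ _).1 S = 0
        rw [ihx S hS, ihy S hS, add_zero]
      | smul r x hx ihx =>
        intro S hS
        have : (⟨r • x, by rw [← hs]; exact Submodule.smul_mem _ r hx⟩ : ↥(LinearMap.ker qm.hom))
            = r • ⟨x, by rw [← hs]; exact hx⟩ := rfl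
        rw [this, map_smul]
        show r • (φ _).1 S = 0
        rw [ihx S hS, smul_zero]
    rintro ⟨v, hv⟩ S hS
    exact main v (by rw [hs]; exact hv) S hS
  let Tm : ModuleCat.{0} R := ModuleCat.of R ↥(LinearMap.ker qm.hom)
  let ιT : Tm ⟶ ModuleCat.of R (Fin m → R) := ModuleCat.ofHom (LinearMap.ker qm.hom).subtype
  haveI : Mono ιT := (ModuleCat.mono_iff_injective _).mpr (Submodule.injective_subtype _)
  let coord : ∀ S : Lam Km, ↥(Xsub Km) →ₗ[R] ↥(Efun Km S) :=
    fun S => (LinearMap.proj S).comp (Xsub Km).subtype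
  let φS : ∀ S : Lam Km, (Tm ⟶ Efun Km S) := fun S => ModuleCat.ofHom ((coord S).comp φ : _ →ₗ[R] _)
  let ψS : ∀ S : Lam Km, (ModuleCat.of R (Fin m → R) ⟶ Efun Km S) :=
    fun S => if h : S₀ ≤ S.1 then 0 else Injective.factorThru (φS S) ιT
  have hψS0 : ∀ S, ∀ _ : S₀ ≤ S.1, ψS S = 0 := fun S h => dif_pos h
  have hψSF : ∀ S, ∀ _ : ¬ S₀ ≤ S.1, ψS S = Injective.factorThru (φS S) ιT := fun S h => dif_neg h
  let Ψ : (Fin m → R) →ₗ[R] (∀ S : Lam Km, ↥(Efun Km S)) :=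
    LinearMap.pi (fun S => ((ψS S).hom : _ →ₗ[R] _))
  have hmem : ∀ v, Ψ v ∈ Xsub Km := fun v => ⟨S₀Λ, fun S hS => by
    show (ψS S) v = 0
    rw [hψS0 S hS]
    rfl⟩
  refine ⟨ModuleCat.ofHom (LinearMap.codRestrict (Xsub Km) Ψ hmem), fun k => ?_⟩
  apply Subtype.ext
  funext S
  show (ψS S) k.1 = (φ k).1 S
  by_cases h : S₀ ≤ S.1
  · rw [hψS0 S h, hvanish k S h]
    rfl
  · rw [hψSF S h]
    exact LinearMap.congr_fun (congrArg ModuleCat.Hom.hom (Injective.comp_factorThru (φS S) ιT)) k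


lemma ker_fg_of_ext_vanish {M : Type} [AddCommGroup M] [Module R M]
    {n : ℕ} (p : (Fin n → R) →ₗ[R] M) (hp : Function.Surjective p)
    (h : ∀ X : ModuleCat.{0} R,
      (∀ F : ModuleCat.{0} R, Module.FinitePresentation R ↥F → Subsingleton (ext1 F X)) →
      Subsingleton (ext1 (ModuleCat.of R M) X)) :
    Module.FinitePresentation R M := by
  classical
  let pm : ModuleCat.of R (Fin n → R) ⟶ ModuleCat.of R M := ModuleCat.ofHom p
  haveI : Projective (ModuleCat.of R (Fin n → R)) :=
    ModuleCat.projective_of_free (Pi.basisFun R (Fin n))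
  haveI : Epi pm := (ModuleCat.epi_iff_surjective pm).mpr hp
  let Km : ModuleCat.{0} R := ModuleCat.of R ↥(LinearMap.ker pm.hom)
  have hsub := h (ModuleCat.of R ↥(Xsub Km)) (fun F' hF' => absPure Km F' hF')
  rw [subsingleton_ext1_iff pm] at hsub
  let Φ : ↥(LinearMap.ker pm.hom) →ₗ[R] (∀ S : Lam Km, ↥(Efun Km S)) :=
    LinearMap.pi (fun S =>
      ((Injective.ι (ModuleCat.of R (↥Km ⧸ S.1))).hom : _ →ₗ[R] _).comp S.1.mkQ)
  have hΦmem : ∀ k, Φ k ∈ Xsub Km := by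
    intro k
    refine ⟨⟨Submodule.span R {k}, Submodule.fg_span_singleton k⟩, fun S hS => ?_⟩
    show (Injective.ι (ModuleCat.of R (↥Km ⧸ S.1))) (S.1.mkQ k) = 0
    have hk : k ∈ S.1 := hS (Submodule.mem_span_singleton_self k)
    rw [show S.1.mkQ k = 0 from (Submodule.Quotient.mk_eq_zero S.1).mpr hk, map_zero]
  obtain ⟨ψ, hψ⟩ := hsub (LinearMap.codRestrict _ Φ hΦmem)
  let bnd : ↥(Xsub Km) → Lam Km := fun x => x.2.choose
  have hbnd : ∀ x : ↥(Xsub Km), ∀ S, (bnd x).1 ≤ S.1 → x.1 S = 0 := fun x => x.2.choose_spec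
  let S₀ : Submodule R ↥Km := Finset.univ.sup (fun i : Fin n => (bnd (ψ (Pi.single i 1))).1)
  have hS₀fg : S₀.FG := Submodule.fg_finset_sup _ _ (fun i _ => (bnd _).2)
  let S₀Λ : Lam Km := ⟨S₀, hS₀fg⟩
  have hvan : ∀ v : (Fin n → R), (ψ v).1 S₀Λ = 0 := by
    have hzero : ((LinearMap.proj S₀Λ).comp
        ((Xsub Km).subtype.comp (ψ.hom : (Fin n → R) →ₗ[R] ↥(Xsub Km)))) = 0 := by
      apply Module.Basis.ext (Pi.basisFun R (Fin n))
      intro i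
      show (ψ ((Pi.basisFun R (Fin n)) i)).1 S₀Λ = 0
      rw [Pi.basisFun_apply]
      exact hbnd (ψ (Pi.single i 1)) S₀Λ
        (Finset.le_sup (f := fun i : Fin n => (bnd (ψ (Pi.single i 1))).1) (Finset.mem_univ i))
    intro v
    exact DFunLike.congr_fun hzero v
  have htop : S₀ = ⊤ := by
    rw [eq_top_iff]
    rintro k -
    have h1 : (ψ k.1) = LinearMap.codRestrict _ Φ hΦmem k := hψ k
    have h2 : (Φ k) S₀Λ = 0 := by
      have := hvan k.1
      rw [h1] at this
      exact this
    have hinj : Function.Injective (Injective.ι (ModuleCat.of R (↥Km ⧸ S₀Λ.1))) :=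
      (ModuleCat.mono_iff_injective _).mp inferInstance
    have h3 : S₀Λ.1.mkQ k = 0 := by
      apply hinj
      rw [map_zero]
      exact h2
    exact (Submodule.Quotient.mk_eq_zero S₀Λ.1).mp h3
  have hfg : (LinearMap.ker pm.hom).FG := by
    rw [← Submodule.fg_top]
    rw [← htop]
    exact hS₀fg
  exact Module.finitePresentation_of_free_of_surjective p hp hfg

end

/- STATEMENT 4: A finitely generated module is FP-projective iff it is finitely presented. -/
theorem stmt4 (R : Type) [Ring R] (M : Type) [AddCommGroup M] [Module R M]
    (hM : Module.Finite R M) :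
    FPProjective (ModuleCat.of R M) ↔ Module.FinitePresentation R M := by
  constructor
  · intro h
    obtain ⟨n, p, hp⟩ := Module.Finite.exists_fin' R M
    exact ker_fg_of_ext_vanish p hp (fun X hX => h X hX)
  · intro hFP X hX
    exact hX (ModuleCat.of R M) hFP
end
end

section
/- Let R be a ring and M a class of finitely generated right R-modules. The following are equivalent: (i) every module in M embeds into a finitely generated projective right R-module; (ii) for every absolutely pure right R-module X, every homomorphism M → X with M ∈ M factors through a projective right R-module; (iii) for every injective right R-module X, every homomorphism M → X with M ∈ M factors through a projective module; (iv) for each M ∈ M, every homomorphism from M into its injective envelope factors through a projective module. -/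
open CategoryTheory

/-- A linear map factors through a projective module. -/
def FactorsThroughProjective {R : Type} [Ring R] {M X : ModuleCat.{0} R}
    (f : M →ₗ[R] X) : Prop :=
  ∃ P : ModuleCat.{0} R, Module.Projective R P ∧
    ∃ (α : M →ₗ[R] P) (β : P →ₗ[R] X), β.comp α = f

section Aux
open CategoryTheory.Limits

noncomputable section Resolution

variable {C : Type*} [Category C] [Abelian C] [EnoughProjectives C]

namespace MyRes

def ofEpiComplex {P Z : C} (p : P ⟶ Z) : ChainComplex C ℕ :=
  ChainComplex.mk' P (Projective.syzygies p) (Projective.d p)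
    (fun f => ⟨_, Projective.d f, by simp only [Projective.d]; erw [Category.assoc, kernel.condition, comp_zero]⟩)

variable {P Z : C} (p : P ⟶ Z)

lemma ofEpiComplex_X_0 : (ofEpiComplex p).X 0 = P := rfl
lemma ofEpiComplex_X_1 : (ofEpiComplex p).X 1 = Projective.over (kernel p) := rfl

lemma ofEpiComplex_d_1_0 :
    (ofEpiComplex p).d 1 0 = Projective.d p := by
  simp [ofEpiComplex]

lemma ofEpiComplex_exactAt_succ (n : ℕ) :
    (ofEpiComplex p).ExactAt (n + 1) := by
  rw [HomologicalComplex.exactAt_iff' _ (n + 1 + 1) (n + 1) n (by simp) (by simp)]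
  let g := (ofEpiComplex p).d (n + 1) n
  let e1 : Projective.syzygies g ≅ (ofEpiComplex p).X (n + 2) :=
    (ChainComplex.mk'XIso P (Projective.syzygies p) (Projective.d p) (fun f => ⟨_, Projective.d f,
      by simp only [Projective.d]; erw [Category.assoc, kernel.condition, comp_zero]⟩) n).symm
  have hd : (ofEpiComplex p).d (n + 2) (n + 1) = e1.inv ≫ Projective.d g :=
    ChainComplex.mk'_d _ _ _ _ n
  let S1 : ShortComplex C := ShortComplex.mk (Projective.d g) g
    (by simp only [Projective.d]; erw [Category.assoc, kernel.condition, comp_zero])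
  have hS1 : S1.Exact := exact_d_f g
  refine ShortComplex.exact_of_iso (S₁ := S1) (ShortComplex.isoMk e1
    (Iso.refl _) (Iso.refl _) ?_ ?_) hS1
  · show e1.hom ≫ (ofEpiComplex p).d (n + 2) (n + 1) = Projective.d g ≫ 𝟙 _
    rw [hd, Iso.hom_inv_id_assoc, Category.comp_id]
  · show 𝟙 _ ≫ g = g ≫ 𝟙 _
    rw [Category.id_comp, Category.comp_id]

instance [Projective P] (n : ℕ) : Projective ((ofEpiComplex p).X n) := by
  obtain (_ | _ | _ | n) := n
  · exact (inferInstance : Projective P)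
  all_goals apply Projective.projective_over

def ofEpi [Projective P] [Epi p] : ProjectiveResolution Z where
  complex := ofEpiComplex p
  π := (ChainComplex.toSingle₀Equiv _ _).symm ⟨p, by
          erw [ofEpiComplex_d_1_0, Projective.d, Category.assoc, kernel.condition, comp_zero]⟩
  quasiIso := ⟨fun n => by
    cases n
    · rw [ChainComplex.quasiIsoAt₀_iff, ShortComplex.quasiIso_iff_of_zeros']
      · refine (ShortComplex.exact_and_epi_g_iff_of_iso ?_).2
          ⟨exact_d_f p, by dsimp; infer_instance⟩
        exact ShortComplex.isoMk (Iso.refl _) (Iso.refl _) (Iso.refl _)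
          (by erw [Category.id_comp, Category.comp_id]; exact (ofEpiComplex_d_1_0 p).symm)
          (by erw [Category.id_comp, Category.comp_id]; exact (ChainComplex.toSingle₀Equiv_symm_apply_f_zero (C := ofEpiComplex p) p _).symm)
      all_goals rfl
    · rw [quasiIsoAt_iff_exactAt']
      · apply ofEpiComplex_exactAt_succ
      · apply ChainComplex.exactAt_succ_single_obj⟩

end MyRes

end Resolution

namespace MyRes

lemma subsingleton_of_isZero {S : Type} [Ring S] {N : ModuleCat S} (h : IsZero N) :
    Subsingleton N := by
  refine ⟨fun a b => ?_⟩
  have h1 : (𝟙 N : N ⟶ N) = 0 := h.eq_of_src _ _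
  have : ∀ x : N, x = 0 := fun x => by
    calc x = (𝟙 N : N ⟶ N) x := rfl
    _ = (0 : N ⟶ N) x := by rw [h1]
    _ = 0 := rfl
  rw [this a, this b]

def equiv_of_iso {S : Type} [Ring S] {A B : ModuleCat S} (e : A ≅ B) : A ≃ B where
  toFun := e.hom
  invFun := e.inv
  left_inv a := by
    have := congrArg (fun (f : A ⟶ A) => f a) e.hom_inv_id
    exact this
  right_inv b := by
    have := congrArg (fun (f : B ⟶ B) => f b) e.inv_hom_id
    exact this

variable {R : Type} [Ring R]

/-- Injective modules are absolutely pure. -/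
lemma subsingleton_ext1_of_injective (X : ModuleCat.{0} R) (hX : Module.Injective R X)
    (F : ModuleCat.{0} R) : Subsingleton (ext1 F X) := by
  let p := Projective.π F
  let res : ProjectiveResolution F := ofEpi p
  let Cx := res.complex
  let K := Cx.linearYonedaObj ℤ X
  have hEx : K.ExactAt 1 := by
    rw [HomologicalComplex.exactAt_iff' K 0 1 2 (by simp) (by simp),
      ShortComplex.moduleCat_exact_iff]
    show ∀ (φ : Cx.X 1 ⟶ X), Cx.d 2 1 ≫ φ = 0 → ∃ ψ : Cx.X 0 ⟶ X, Cx.d 1 0 ≫ ψ = φ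
    intro φ hφ'
    have hC : Cx.ExactAt 1 := ofEpiComplex_exactAt_succ p 0
    rw [HomologicalComplex.exactAt_iff' Cx 2 1 0 (by simp) (by simp),
        ShortComplex.moduleCat_exact_iff_range_eq_ker] at hC
    have hC' : LinearMap.range (Cx.d 2 1).hom = LinearMap.ker (Cx.d 1 0).hom := hC
    have hker : LinearMap.ker (Cx.d 1 0).hom ≤ LinearMap.ker φ.hom := by
      rw [← hC']
      rintro x ⟨y, rfl⟩
      have : (Cx.d 2 1 ≫ φ) y = 0 := by rw [hφ']; rfl
      exact this
    obtain ⟨h, hh⟩ := hX.out (LinearMap.range (Cx.d 1 0).hom).subtype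
      (Submodule.injective_subtype _)
      ((Submodule.liftQ _ φ.hom hker).comp
        ((LinearMap.quotKerEquivRange (Cx.d 1 0).hom).symm : _ →ₗ[R] _))
    refine ⟨ModuleCat.ofHom h, ?_⟩
    ext x
    have h1 := hh ⟨Cx.d 1 0 x, LinearMap.mem_range_self _ x⟩
    simp only [Submodule.coe_subtype] at h1
    show h (Cx.d 1 0 x) = φ x
    have h2 : (LinearMap.quotKerEquivRange (Cx.d 1 0).hom).symm
        ⟨Cx.d 1 0 x, LinearMap.mem_range_self _ x⟩
        = Submodule.Quotient.mk x := by
      rw [LinearEquiv.symm_apply_eq]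
      exact Subtype.ext (LinearMap.quotKerEquivRange_apply_mk _ _).symm
    rw [h1]
    simp only [LinearMap.comp_apply, LinearEquiv.coe_coe]
    rw [h2]
    exact Submodule.liftQ_apply _ _ _
  have hz : IsZero (K.homology 1) := by
    rw [← HomologicalComplex.exactAt_iff_isZero_homology]; exact hEx
  have : Subsingleton (K.homology 1) := subsingleton_of_isZero hz
  exact Equiv.subsingleton (equiv_of_iso (res.isoExt 1 X))

/-- If `Ext¹(P/M, X)` vanishes, maps `M → X` extend along `M ↪ P` (for `P` projective). -/
lemma extend_of_subsingleton_ext1 {M P X : ModuleCat.{0} R} (ι : M →ₗ[R] P)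
    (hι : Function.Injective ι) (hP : Module.Projective R P)
    (h : Subsingleton (ext1 (ModuleCat.of R (↥P ⧸ LinearMap.range ι)) X))
    (f : M →ₗ[R] X) : ∃ ψ : P →ₗ[R] X, ψ.comp ι = f := by
  haveI : Projective P := ((IsProjective.iff_projective ↥P).mp hP : Projective (ModuleCat.of R ↥P))
  let F : ModuleCat.{0} R := ModuleCat.of R (↥P ⧸ LinearMap.range ι)
  let p : P ⟶ F := ModuleCat.ofHom (LinearMap.range ι).mkQ
  haveI : Epi p := (ModuleCat.epi_iff_surjective _).mpr (Submodule.mkQ_surjective _)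
  let res : ProjectiveResolution F := ofEpi p
  let Cx := res.complex
  let K := Cx.linearYonedaObj ℤ X
  haveI hsub : Subsingleton (ext1 F X) := h
  haveI hz : Subsingleton (K.homology 1) :=
    Equiv.subsingleton (equiv_of_iso (res.isoExt 1 X).symm)
  have hEx : K.ExactAt 1 := by
    rw [HomologicalComplex.exactAt_iff_isZero_homology]
    exact ModuleCat.isZero_of_subsingleton _
  rw [HomologicalComplex.exactAt_iff' K 0 1 2 (by simp) (by simp),
    ShortComplex.moduleCat_exact_iff] at hEx
  have hEx' : ∀ (φ : Cx.X 1 ⟶ X), Cx.d 2 1 ≫ φ = 0 →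
      ∃ ψ : Cx.X 0 ⟶ X, Cx.d 1 0 ≫ ψ = φ := hEx
  -- build the cocycle φ
  let e : M ≃ₗ[R] LinearMap.range ι := LinearEquiv.ofInjective ι hι
  have hes : ∀ v : LinearMap.range ι, ι (e.symm v) = ↑v := by
    intro v
    conv_rhs => rw [← e.apply_symm_apply v]
    exact (LinearEquiv.ofInjective_apply ι _).symm
  have hmem : ∀ x : ↥(kernel p), kernel.ι p x ∈ LinearMap.range ι := by
    intro x
    have h0 : p (kernel.ι p x) = 0 := by
      have := kernel.condition p
      exact LinearMap.congr_fun (ModuleCat.hom_ext_iff.mp this) x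
    exact (Submodule.Quotient.mk_eq_zero _).mp h0
  let k : kernel p ⟶ X :=
    ModuleCat.ofHom (f ∘ₗ (e.symm : LinearMap.range ι →ₗ[R] M) ∘ₗ
      LinearMap.codRestrict (LinearMap.range ι) (kernel.ι p).hom hmem)
  let φ : Cx.X 1 ⟶ X := Projective.π (kernel p) ≫ k
  have h10 : Cx.d 1 0 = Projective.π (kernel p) ≫ kernel.ι p := by
    show (ofEpiComplex p).d 1 0 = _
    rw [ofEpiComplex_d_1_0]
    rfl
  have hc : Cx.d 2 1 ≫ φ = 0 := by
    have hz1 : (Cx.d 2 1 ≫ Projective.π (kernel p)) ≫ kernel.ι p = 0 := by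
      erw [Category.assoc, ← h10, HomologicalComplex.d_comp_d]
      rfl
    have hz2 : Cx.d 2 1 ≫ Projective.π (kernel p) = 0 := by
      rw [← cancel_mono (kernel.ι p), hz1, zero_comp]
    show Cx.d 2 1 ≫ (Projective.π (kernel p) ≫ k) = 0
    erw [← Category.assoc, hz2, zero_comp]
  obtain ⟨ψ, hψ⟩ := hEx' φ hc
  have hext : kernel.ι p ≫ ψ = k := by
    erw [← cancel_epi (Projective.π (kernel p)), ← Category.assoc, ← h10, hψ]
    rfl
  refine ⟨ψ.hom, ?_⟩
  ext m
  show ψ (ι m) = f m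
  have hm' : ι m ∈ LinearMap.ker p.hom := by
    show p (ι m) = 0
    exact (Submodule.Quotient.mk_eq_zero _).mpr ⟨m, rfl⟩
  let x : ↥(kernel p) := (ModuleCat.kernelIsoKer p).inv ⟨ι m, hm'⟩
  have hx : kernel.ι p x = ι m :=
    LinearMap.congr_fun (ModuleCat.hom_ext_iff.mp (ModuleCat.kernelIsoKer_inv_kernel_ι p)) ⟨ι m, hm'⟩
  have h5 : ψ (ι m) = k x := by
    rw [← hx]
    calc ψ (kernel.ι p x) = (kernel.ι p ≫ ψ) x := rfl
    _ = k x := LinearMap.congr_fun (ModuleCat.hom_ext_iff.mp hext) x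
  have h6 : k x = f m := by
    show f (e.symm ⟨kernel.ι p x, hmem x⟩) = f m
    congr 1
    apply hι
    rw [hes ⟨kernel.ι p x, hmem x⟩]
    exact hx
  rw [h5, h6]

end MyRes

end Aux

/- STATEMENT 5: for a class `𝓜` of finitely generated modules, TFAE:
(i) every `M ∈ 𝓜` embeds in a finitely generated projective;
(ii) every map from `M ∈ 𝓜` to an absolutely pure module factors through a projective;
(iii) every map from `M ∈ 𝓜` to an injective module factors through a projective;
(iv) for each `M ∈ 𝓜`, every embedding of `M` into an injective module (in particular its
injective envelope) factors through a projective. -/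
theorem stmt5 (R : Type) [Ring R] (𝓜 : ModuleCat.{0} R → Prop)
    (hfg : ∀ M : ModuleCat.{0} R, 𝓜 M → Module.Finite R M) :
    List.TFAE
      [∀ M : ModuleCat.{0} R, 𝓜 M → ∃ P : ModuleCat.{0} R,
          Module.Finite R P ∧ Module.Projective R P ∧
          ∃ ι : M →ₗ[R] P, Function.Injective ι,
       ∀ X : ModuleCat.{0} R, AbsolutelyPure X →
          ∀ M : ModuleCat.{0} R, 𝓜 M → ∀ f : M →ₗ[R] X, FactorsThroughProjective f,
       ∀ X : ModuleCat.{0} R, Module.Injective R X →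
          ∀ M : ModuleCat.{0} R, 𝓜 M → ∀ f : M →ₗ[R] X, FactorsThroughProjective f,
       ∀ M : ModuleCat.{0} R, 𝓜 M → ∀ E : ModuleCat.{0} R, Module.Injective R E →
          ∀ ι : M →ₗ[R] E, Function.Injective ι → FactorsThroughProjective ι] := by
  tfae_have 1 → 2 := by
    intro h1 X hX M hM f
    obtain ⟨P, hPfin, hPproj, ι, hι⟩ := h1 M hM
    haveI := hfg M hM
    haveI := hPfin
    haveI : Module.Projective R ↥P := hPproj
    have hrfg : (LinearMap.range ι).FG := by
      rw [LinearMap.range_eq_map]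
      exact Submodule.FG.map ι (Module.Finite.fg_top (R := R) (M := ↥M))
    haveI : Module.FinitePresentation R ↥P := Module.finitePresentation_of_projective R ↥P
    have hfp : Module.FinitePresentation R (↥P ⧸ LinearMap.range ι) :=
      Module.finitePresentation_of_surjective (LinearMap.range ι).mkQ
        (Submodule.mkQ_surjective _) (by rwa [Submodule.ker_mkQ])
    have hsub := hX (ModuleCat.of R (↥P ⧸ LinearMap.range ι)) hfp
    obtain ⟨ψ, hψ⟩ := MyRes.extend_of_subsingleton_ext1 ι hι hPproj hsub f
    exact ⟨P, hPproj, ι, ψ, hψ⟩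
  tfae_have 2 → 3 := by
    intro h2 X hX M hM f
    exact h2 X (fun F _ => MyRes.subsingleton_ext1_of_injective X hX F) M hM f
  tfae_have 3 → 4 := by
    intro h3 M hM E hE ι _
    exact h3 E hE M hM ι
  tfae_have 4 → 1 := by
    intro h4 M hM
    classical
    let E : ModuleCat.{0} R := Injective.under M
    haveI : CategoryTheory.Injective (ModuleCat.of R ↥E) := Injective.injective_under M
    have hE : Module.Injective R ↥E := Module.injective_module_of_injective_object R ↥E
    let ι0 : ↥M →ₗ[R] ↥E := (Injective.ι M).hom
    have hι0 : Function.Injective ι0 :=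
      (ModuleCat.mono_iff_injective (Injective.ι M)).mp inferInstance
    obtain ⟨Q, hQ, α, β, hβα⟩ := h4 M hM E hE ι0 hι0
    have hα : Function.Injective α := by
      intro a b hab
      apply hι0
      calc ι0 a = β (α a) := by rw [← hβα]; rfl
      _ = β (α b) := by rw [hab]
      _ = ι0 b := by rw [← hβα]; rfl
    obtain ⟨s, hs⟩ := hQ.out
    let t : ↥M →ₗ[R] (↥Q →₀ R) := s ∘ₗ α
    have ht : Function.Injective t := hs.injective.comp hα
    obtain ⟨gens, hgens⟩ := (hfg M hM).fg_top
    let S : Finset ↥Q := gens.sup fun m => (t m).support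
    have hsup : ∀ m ∈ gens, t m ∈ Finsupp.supported R R (↑S : Set ↥Q) := by
      intro m hm
      rw [Finsupp.mem_supported]
      intro q hq
      exact Finset.mem_coe.mpr (Finset.le_sup (f := fun m => (t m).support) hm hq)
    have hle : (⊤ : Submodule R ↥M) ≤ (Finsupp.supported R R (↑S : Set ↥Q)).comap t := by
      rw [← hgens, Submodule.span_le]
      intro x hx
      exact hsup x hx
    let t' : ↥M →ₗ[R] ↥(Finsupp.supported R R (↑S : Set ↥Q)) :=
      LinearMap.codRestrict _ t (fun m => hle trivial)
    let eS : ↥(Finsupp.supported R R (↑S : Set ↥Q)) ≃ₗ[R] ((↑S : Set ↥Q) →₀ R) :=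
      Finsupp.supportedEquivFinsupp (↑S : Set ↥Q)
    haveI i1 : Module.Finite R ((↑S : Set ↥Q) →₀ R) := inferInstance
    haveI i2 : Module.Projective R ((↑S : Set ↥Q) →₀ R) := inferInstance
    refine ⟨ModuleCat.of R ((↑S : Set ↥Q) →₀ R), i1, i2,
      eS.toLinearMap ∘ₗ t', ?_⟩
    have ht' : Function.Injective t' := by
      intro a b h
      exact ht (congrArg Subtype.val h)
    exact eS.injective.comp ht'
  tfae_finish
end

section
/- A ring R is a right IF ring (every injective right R-module is flat) if and only if every finitely presented right R-module embeds into a finitely generated projective right R-module. -/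
/- STATEMENT 6: `R` is a right IF ring (every injective module is flat) iff every finitely
presented module embeds into a finitely generated projective module. -/
theorem stmt6 (R : Type) [CommRing R] :
    (∀ X : ModuleCat.{0} R, Module.Injective R X → Module.Flat R X) ↔
      (∀ N : ModuleCat.{0} R, Module.FinitePresentation R N →
        ∃ P : ModuleCat.{0} R, Module.Finite R P ∧ Module.Projective R P ∧
          ∃ ι : N →ₗ[R] P, Function.Injective ι) := by
  constructor
  · -- IF ring → every f.p. module embeds in f.g. projective
    intro hIF N hFP
    -- embed N into an injective module E
    let E : ModuleCat.{0} R := CategoryTheory.Injective.under N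
    have hEobj : CategoryTheory.Injective (ModuleCat.of R E) :=
      CategoryTheory.Injective.injective_under N
    have hEinj : Module.Injective R E :=
      Module.injective_module_of_injective_object R E
    have hEflat : Module.Flat R E := hIF E hEinj
    let i : N →ₗ[R] E := (CategoryTheory.Injective.ι N).hom
    have hi : Function.Injective i := by
      have : CategoryTheory.Mono (CategoryTheory.Injective.ι N) :=
        CategoryTheory.Injective.ι_mono N
      exact (ModuleCat.mono_iff_injective (CategoryTheory.Injective.ι N)).mp this
    obtain ⟨κ, h₂, h₃, heq⟩ :=
      Module.Flat.exists_factorization_of_isFinitelyPresented (R := R) (M := E) (P := N) i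
    refine ⟨ModuleCat.of R (Fin κ →₀ R), (inferInstance : Module.Finite R (Fin κ →₀ R)),
      (inferInstance : Module.Projective R (Fin κ →₀ R)), h₂, ?_⟩
    intro a b hab
    apply hi
    rw [heq]
    exact congrArg h₃ hab
  · -- converse
    intro hEmb X hXinj
    apply Module.Flat.of_forall_exists_factorization
    intro l f x hxf
    classical
    -- quotient by the span of f
    set S : Submodule R (Fin l →₀ R) := Submodule.span R {f} with hS
    have hfp : Module.FinitePresentation R ((Fin l →₀ R) ⧸ S) := by
      apply Module.finitePresentation_of_free_of_surjective S.mkQ S.mkQ_surjective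
      rw [Submodule.ker_mkQ]
      exact ⟨{f}, by simp [hS]⟩
    have hfS : f ∈ S := Submodule.mem_span_singleton_self f
    -- induced map on the quotient
    have hle : S ≤ LinearMap.ker x := by
      rw [hS, Submodule.span_le, Set.singleton_subset_iff]
      exact hxf
    let xbar : ((Fin l →₀ R) ⧸ S) →ₗ[R] X := S.liftQ x hle
    -- embed the quotient into a f.g. projective module
    obtain ⟨P, hPfin, hPproj, j₀, hj₀⟩ := hEmb (ModuleCat.of R ((Fin l →₀ R) ⧸ S)) hfp
    let j : ((Fin l →₀ R) ⧸ S) →ₗ[R] P := j₀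
    have hj : Function.Injective j := hj₀
    -- extend xbar along j using injectivity of X
    obtain ⟨y', hy'⟩ := hXinj.out j hj xbar
    -- P is a direct summand of a finite free module
    obtain ⟨n, g, hg⟩ := Module.Finite.exists_fin' R P
    obtain ⟨s, hs⟩ := Module.projective_lifting_property g LinearMap.id hg
    let e : (Fin n →₀ R) ≃ₗ[R] (Fin n → R) := Finsupp.linearEquivFunOnFinite R R (Fin n)
    refine ⟨n,
      e.symm.toLinearMap ∘ₗ s ∘ₗ j ∘ₗ S.mkQ,
      y' ∘ₗ g ∘ₗ e.toLinearMap, ?_, ?_⟩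
    · apply LinearMap.ext
      intro v
      simp only [LinearMap.comp_apply, LinearEquiv.coe_coe, LinearEquiv.apply_symm_apply]
      have h1 : g (s (j (S.mkQ v))) = j (S.mkQ v) := LinearMap.congr_fun hs (j (S.mkQ v))
      exact ((congrArg y' h1).trans (hy' (S.mkQ v))).symm
    · have h0 : S.mkQ f = 0 := (Submodule.Quotient.mk_eq_zero S).mpr hfS
      show e.symm (s (j (S.mkQ f))) = 0
      rw [h0, map_zero, map_zero, map_zero]
end

section
/- Let R be a ring and N a 2-presented right R-module (there is an exact sequence F₂ → F₁ → F₀ → N → 0 with F₀, F₁, F₂ finitely generated free). Then for every family (Z_i) of left R-modules, the natural map Tor₁^R(N, ∏ Z_i) → ∏ Tor₁^R(N, Z_i) is an isomorphism. -/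
open CategoryTheory

/-- A module `N` is 2-presented if there is an exact sequence
`F₂ → F₁ → F₀ → N → 0` with `F₀, F₁, F₂` finitely generated free. -/
def TwoPresented (R : Type) [Ring R] (N : Type) [AddCommGroup N] [Module R N] : Prop :=
  ∃ (n₀ n₁ n₂ : ℕ) (f₂ : (Fin n₂ → R) →ₗ[R] (Fin n₁ → R))
    (f₁ : (Fin n₁ → R) →ₗ[R] (Fin n₀ → R)) (f₀ : (Fin n₀ → R) →ₗ[R] N),
    Function.Surjective f₀ ∧ Function.Exact f₁ f₀ ∧ Function.Exact f₂ f₁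

section PiTensorLemmas
open TensorProduct LinearMap
variable {R : Type} [CommRing R] {ι : Type} (Z : ι → Type)
  [∀ i, AddCommGroup (Z i)] [∀ i, Module R (Z i)]

lemma piRightHom_eq_lTensor_proj {A : Type} [AddCommGroup A] [Module R A]
    (x : TensorProduct R A (∀ i, Z i)) (i : ι) :
    TensorProduct.piRightHom R R A Z x i = LinearMap.lTensor A (LinearMap.proj i) x := by
  induction x using TensorProduct.induction_on with
  | zero => simp
  | tmul a z => simp
  | add a b ha hb => simp only [map_add, Pi.add_apply, ha, hb]

section PiTensor
variable {R : Type} [CommRing R] {ι : Type} (Z : ι → Type)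
  [∀ i, AddCommGroup (Z i)] [∀ i, Module R (Z i)]

/-- tensor-with-finite-free iso -/
noncomputable def eFree (n : ℕ) (W : Type) [AddCommGroup W] [Module R W] :
    (TensorProduct R (Fin n → R) W) ≃ₗ[R] (Fin n → W) :=
  (TensorProduct.comm R (Fin n → R) W) ≪≫ₗ TensorProduct.piScalarRight R R W (Fin n)

lemma eFree_tmul (n : ℕ) (W : Type) [AddCommGroup W] [Module R W] (v : Fin n → R) (w : W) :
    eFree n W (v ⊗ₜ w) = fun j => v j • w := by
  simp [eFree]

lemma eFree_piRightHom (n : ℕ) (x : TensorProduct R (Fin n → R) (∀ i, Z i)) (i : ι) :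
    eFree n (Z i) (TensorProduct.piRightHom R R (Fin n → R) Z x i)
      = fun j => eFree n (∀ i, Z i) x j i := by
  induction x using TensorProduct.induction_on with
  | zero =>
      rw [LinearMap.map_zero]
      ext j
      rw [Pi.zero_apply, LinearEquiv.map_zero, LinearEquiv.map_zero]
      simp
  | tmul v z => ext j; simp [eFree_tmul]
  | add a b ha hb => ext j; simp only [map_add, Pi.add_apply, ha, hb]

lemma piRightHom_bijective_free (n : ℕ) :
    Function.Bijective (TensorProduct.piRightHom R R (Fin n → R) Z) := by
  have key : ∀ x i, TensorProduct.piRightHom R R (Fin n → R) Z x i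
      = (eFree n (Z i)).symm (fun j => eFree n (∀ i, Z i) x j i) := by
    intro x i
    rw [← eFree_piRightHom]
    simp
  refine ⟨?_, ?_⟩
  · intro x y h
    apply (eFree n (∀ i, Z i)).injective
    ext j i
    have := congrFun h i
    rw [key, key] at this
    exact congrFun ((eFree n (Z i)).symm.injective this) j
  · intro u
    refine ⟨(eFree n (∀ i, Z i)).symm (fun j i => eFree n (Z i) (u i) j), ?_⟩
    ext i
    rw [key]
    simp



lemma piRightHom_rTensor_comm {A B : Type} [AddCommGroup A] [Module R A]
    [AddCommGroup B] [Module R B]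
    (f : A →ₗ[R] B) (x : TensorProduct R A (∀ i, Z i)) (i : ι) :
    TensorProduct.piRightHom R R B Z (LinearMap.rTensor _ f x) i
      = LinearMap.rTensor (Z i) f (TensorProduct.piRightHom R R A Z x i) := by
  induction x using TensorProduct.induction_on with
  | zero => simp
  | tmul a z => simp
  | add a b ha hb => simp only [map_add, Pi.add_apply, ha, hb]


lemma piRightHom_bijective_of_presented
    {M : Type} [AddCommGroup M] [Module R M]
    {n₁ n₀ : ℕ} (f : (Fin n₁ → R) →ₗ[R] (Fin n₀ → R)) (g : (Fin n₀ → R) →ₗ[R] M)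
    (hg : Function.Surjective g) (hfg : Function.Exact f g) :
    Function.Bijective (TensorProduct.piRightHom R R M Z) := by
  have hgf0 : ∀ a, g (f a) = 0 := fun a => hfg.apply_apply_eq_zero a
  have hgf : g ∘ₗ f = 0 := by ext a; simp [hgf0]
  constructor
  · rw [injective_iff_map_eq_zero]
    intro x hx
    obtain ⟨y, rfl⟩ := LinearMap.rTensor_surjective (∀ i, Z i) hg x
    have h1 : ∀ i, LinearMap.rTensor (Z i) g (TensorProduct.piRightHom R R _ Z y i) = 0 := by
      intro i
      rw [← piRightHom_rTensor_comm, hx]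
      rfl
    have h2 : ∀ i, ∃ v, LinearMap.rTensor (Z i) f v
        = TensorProduct.piRightHom R R _ Z y i := by
      intro i
      exact (rTensor_exact (Z i) hfg hg _).mp (h1 i)
    choose v hv using h2
    obtain ⟨z, hz⟩ := (piRightHom_bijective_free Z n₁).2 v
    have hy : LinearMap.rTensor (∀ i, Z i) f z = y := by
      apply (piRightHom_bijective_free Z n₀).1
      ext i
      rw [piRightHom_rTensor_comm, hz, hv]
    rw [← hy, ← LinearMap.rTensor_comp_apply, hgf]
    simp
  · intro u
    have h1 : ∀ i, ∃ w, LinearMap.rTensor (Z i) g w = u i :=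
      fun i => LinearMap.rTensor_surjective (Z i) hg (u i)
    choose w hw using h1
    obtain ⟨x, hx⟩ := (piRightHom_bijective_free Z n₀).2 w
    refine ⟨LinearMap.rTensor _ g x, ?_⟩
    ext i
    rw [piRightHom_rTensor_comm, hx, hw]
end PiTensor
open CategoryTheory MonoidalCategory HomologicalComplex CategoryTheory.Limits

noncomputable section Core
variable {R : Type} [CommRing R]

/-- tensor-on-the-left functor -/
noncomputable abbrev TL (M : ModuleCat.{0} R) : ModuleCat.{0} R ⥤ ModuleCat.{0} R :=
  (tensoringLeft (ModuleCat.{0} R)).obj M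

/-- the complex `M ⊗ P(W)` -/
noncomputable abbrev CC (M W : ModuleCat.{0} R) : ChainComplex (ModuleCat.{0} R) ℕ :=
  ((TL M).mapHomologicalComplex _).obj (projectiveResolution W).complex

/-- morphism of complexes induced in the first variable -/
noncomputable abbrev Phi {M M' : ModuleCat.{0} R} (f : M ⟶ M') (W : ModuleCat.{0} R) :
    CC M W ⟶ CC M' W :=
  (NatTrans.mapHomologicalComplex ((tensoringLeft (ModuleCat.{0} R)).map f) _).app
    (projectiveResolution W).complex

lemma flatX (W : ModuleCat.{0} R) (n : ℕ) :
    Module.Flat R ((projectiveResolution W).complex.X n) := by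
  have h : Module.Projective R ((projectiveResolution W).complex.X n) := by
    rw [IsProjective.iff_projective]
    rw [ModuleCat.of_coe]
    infer_instance
  infer_instance

lemma exactP (W : ModuleCat.{0} R) :
    Function.Exact ((projectiveResolution W).complex.d 2 1)
      ((projectiveResolution W).complex.d 1 0) := by
  have h := (projectiveResolution W).complex_exactAt_succ 0
  rw [HomologicalComplex.exactAt_iff' _ 2 1 0 (by simp) (by simp),
    ShortComplex.moduleCat_exact_iff] at h
  intro y
  constructor
  · intro hy
    obtain ⟨x, hx⟩ := h y hy
    exact ⟨x, hx⟩
  · rintro ⟨x, rfl⟩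
    have h0 := (projectiveResolution W).complex.d_comp_d 2 1 0
    calc ((projectiveResolution W).complex.d 1 0) ((projectiveResolution W).complex.d 2 1 x)
        = ((projectiveResolution W).complex.d 2 1 ≫ (projectiveResolution W).complex.d 1 0) x := rfl
      _ = 0 := by rw [h0]; rfl

section
variable {K F N : ModuleCat.{0} R} (i : K ⟶ F) (p : F ⟶ N)

/-- the tensored short exact sequence of complexes -/
noncomputable def Sg (w : i ≫ p = 0) (W : ModuleCat.{0} R) :
    ShortComplex (HomologicalComplex (ModuleCat.{0} R) (ComplexShape.down ℕ)) :=
  ShortComplex.mk (Phi i W) (Phi p W) (by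
    ext n x
    have hpi : p.hom ∘ₗ i.hom = 0 := by
      apply LinearMap.ext; intro a
      exact congrArg (fun f => ModuleCat.Hom.hom f a) w
    show LinearMap.rTensor _ p.hom (LinearMap.rTensor _ i.hom x) = 0
    exact (LinearMap.rTensor_comp_apply _ p.hom i.hom x).symm.trans (by rw [hpi, LinearMap.rTensor_zero]; rfl))

lemma Sg_shortExact (w : i ≫ p = 0) (hi : Function.Injective i) (hp : Function.Surjective p)
    (hip : Function.Exact i p) (W : ModuleCat.{0} R) : (Sg i p w W).ShortExact := by
  rw [HomologicalComplex.shortExact_iff_degreewise_shortExact]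
  intro n
  have := flatX W n
  have m : Mono ((Sg i p w W).map (HomologicalComplex.eval _ _ n)).f :=
    (ModuleCat.mono_iff_injective _).mpr
      (Module.Flat.rTensor_preserves_injective_linearMap i.hom hi)
  have e : Epi ((Sg i p w W).map (HomologicalComplex.eval _ _ n)).g :=
    (ModuleCat.epi_iff_surjective _).mpr
      (LinearMap.rTensor_surjective _ hp)
  have ex : ((Sg i p w W).map (HomologicalComplex.eval _ _ n)).Exact := by
    rw [ShortComplex.moduleCat_exact_iff]
    intro x hx
    exact (rTensor_exact ((projectiveResolution W).complex.X n) hip hp x).mp hx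
  exact ⟨ex⟩

lemma isZero_H1 (W : ModuleCat.{0} R) [Module.Flat R F] :
    Limits.IsZero ((CC F W).homology 1) := by
  rw [← HomologicalComplex.exactAt_iff_isZero_homology]
  rw [HomologicalComplex.exactAt_iff' _ 2 1 0 (by simp) (by simp),
    ShortComplex.moduleCat_exact_iff]
  intro x hx
  have h := Module.Flat.lTensor_exact (M := F) (R := R) (exactP W)
  exact (h x).mp hx

/-- the connecting map -/
noncomputable def delta (w : i ≫ p = 0) (hi : Function.Injective i)
    (hp : Function.Surjective p) (hip : Function.Exact i p) (W : ModuleCat.{0} R) :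
    (CC N W).homology 1 ⟶ (CC K W).homology 0 :=
  (Sg_shortExact i p w hi hp hip W).δ 1 0 rfl

/-- the degree-0 identification `H₀(M ⊗ P(W)) ⟶ M ⊗ W` -/
noncomputable def beta (M W : ModuleCat.{0} R) : (CC M W).homology 0 ⟶ (TL M).obj W :=
  (ChainComplex.isoHomologyι₀ _).hom ≫ (projectiveResolution W).fromLeftDerivedZero' (TL M)

instance (M W : ModuleCat.{0} R) : IsIso (beta M W) := by
  haveI h0 : PreservesColimits (TL (R := R) M) := by
    show PreservesColimits (tensorLeft M); infer_instance
  haveI h1 : PreservesFiniteColimits (TL (R := R) M) :=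
    PreservesColimits.preservesFiniteColimits _
  haveI h2 : IsIso ((projectiveResolution W).fromLeftDerivedZero' (TL M)) := inferInstance
  unfold beta
  infer_instance

lemma beta_M_naturality {M M' : ModuleCat.{0} R} (f : M ⟶ M') (W : ModuleCat.{0} R) :
    homologyMap (Phi f W) 0 ≫ beta M' W =
      beta M W ≫ ((tensoringLeft (ModuleCat.{0} R)).map f).app W := by
  dsimp [beta]
  simp only [ChainComplex.isoHomologyι₀, HomologicalComplex.isoHomologyι_hom]
  rw [HomologicalComplex.homologyι_naturality_assoc, Category.assoc, cancel_epi]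
  rw [← cancel_epi ((CC M W).pOpcycles 0)]
  rw [HomologicalComplex.p_opcyclesMap_assoc,
    ProjectiveResolution.pOpcycles_comp_fromLeftDerivedZero',
    ProjectiveResolution.pOpcycles_comp_fromLeftDerivedZero'_assoc]
  exact (((tensoringLeft (ModuleCat.{0} R)).map f).naturality _).symm

lemma beta_W_naturality (M : ModuleCat.{0} R) {W W' : ModuleCat.{0} R} (g : W ⟶ W') :
    homologyMap (((TL M).mapHomologicalComplex _).map
        (ProjectiveResolution.lift g (projectiveResolution W) (projectiveResolution W'))) 0 ≫
        beta M W' = beta M W ≫ (TL M).map g := by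
  dsimp [beta]
  simp only [ChainComplex.isoHomologyι₀, HomologicalComplex.isoHomologyι_hom]
  rw [HomologicalComplex.homologyι_naturality_assoc, Category.assoc, cancel_epi]
  exact ProjectiveResolution.fromLeftDerivedZero'_naturality g (projectiveResolution W)
    (projectiveResolution W') (ProjectiveResolution.lift g _ _) (ProjectiveResolution.lift_commutes_zero _ _ _) (TL M)

variable {K F N : ModuleCat.{0} R} (i : K ⟶ F) (p : F ⟶ N)

lemma core (w : i ≫ p = 0) (hi : Function.Injective i) (hp : Function.Surjective p)
    (hip : Function.Exact i p) [Module.Flat R F] :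
    ∃ u : ∀ W : ModuleCat.{0} R, ((((TL N).leftDerived 1).obj W) ⟶ (TL K).obj W),
      (∀ W, Function.Injective (u W)) ∧
      (∀ W (x : (TL K).obj W), (∃ t, (u W) t = x) ↔
        (((tensoringLeft (ModuleCat.{0} R)).map i).app W) x = 0) ∧
      (∀ (W W' : ModuleCat.{0} R) (g : W ⟶ W'),
        u W ≫ (TL K).map g = ((TL N).leftDerived 1).map g ≫ u W') := by
  refine ⟨fun W => ((projectiveResolution W).isoLeftDerivedObj (TL N) 1).hom ≫
    delta i p w hi hp hip W ≫ beta K W, ?_, ?_, ?_⟩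
  · -- injectivity
    intro W
    have h3 := (Sg_shortExact i p w hi hp hip W).homology_exact₃ 1 0 rfl
    have hf0 : homologyMap (Sg i p w W).g 1 = 0 :=
      (isZero_H1 (F := F) (R := R) W).eq_of_src _ _
    have hm : Mono (delta i p w hi hp hip W) := h3.mono_g hf0
    rw [← ModuleCat.mono_iff_injective]
    beta_reduce
    exact @mono_comp _ _ _ _ _ _ inferInstance _ (@mono_comp _ _ _ _ _ _ hm _ inferInstance)
  · -- range description
    intro W x
    have h1 := (Sg_shortExact i p w hi hp hip W).homology_exact₁ 1 0 rfl
    have hrk : LinearMap.range (delta i p w hi hp hip W).hom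
        = LinearMap.ker (homologyMap (Phi i W) 0).hom := h1.moduleCat_range_eq_ker
    have hsq := beta_M_naturality (R := R) i W
    have hbKinj : Function.Injective (beta K W) := by
      rw [← ModuleCat.mono_iff_injective]; infer_instance
    have hbKsurj : Function.Surjective (beta K W) := by
      rw [← ModuleCat.epi_iff_surjective]; infer_instance
    have hbFinj : Function.Injective (beta F W) := by
      rw [← ModuleCat.mono_iff_injective]; infer_instance
    constructor
    · rintro ⟨t, rfl⟩
      set s := (delta i p w hi hp hip W)
        ((((projectiveResolution W).isoLeftDerivedObj (TL N) 1).hom) t) with hs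
      have hmem : s ∈ LinearMap.ker (homologyMap (Phi i W) 0).hom := by
        rw [← hrk]
        exact ⟨_, rfl⟩
      have : (beta K W ≫ ((tensoringLeft (ModuleCat.{0} R)).map i).app W) s
          = (homologyMap (Phi i W) 0 ≫ beta F W) s := by rw [hsq]
      have h2 : (((tensoringLeft (ModuleCat.{0} R)).map i).app W) ((beta K W) s)
          = (beta F W) ((homologyMap (Phi i W) 0) s) := this
      have hz : homologyMap (Phi i W) 0 s = 0 := hmem
      show (((tensoringLeft (ModuleCat.{0} R)).map i).app W)
          ((((projectiveResolution W).isoLeftDerivedObj (TL N) 1).hom ≫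
            delta i p w hi hp hip W ≫ beta K W) t) = 0
      have hc : ((((projectiveResolution W).isoLeftDerivedObj (TL N) 1).hom ≫
          delta i p w hi hp hip W ≫ beta K W) t) = (beta K W) s := rfl
      rw [hc, h2, hz, map_zero]
    · intro hx
      obtain ⟨y, hy⟩ := hbKsurj x
      have h2' : (homologyMap (Phi i W) 0 ≫ beta F W) y
          = (beta K W ≫ ((tensoringLeft (ModuleCat.{0} R)).map i).app W) y := by rw [hsq]
      have h2 : (beta F W) ((homologyMap (Phi i W) 0) y)
          = (((tensoringLeft (ModuleCat.{0} R)).map i).app W) ((beta K W) y) := h2'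
      have hz : y ∈ LinearMap.ker (homologyMap (Phi i W) 0).hom := by
        show homologyMap (Phi i W) 0 y = 0
        apply hbFinj
        rw [h2, hy, hx, map_zero]
      rw [← hrk] at hz
      obtain ⟨s, hsy⟩ := hz
      have hαsurj : Function.Surjective
          (((projectiveResolution W).isoLeftDerivedObj (TL N) 1).hom) := by
        rw [← ModuleCat.epi_iff_surjective]; infer_instance
      obtain ⟨t, ht⟩ := hαsurj s
      refine ⟨t, ?_⟩
      show (beta K W) ((delta i p w hi hp hip W)
        ((((projectiveResolution W).isoLeftDerivedObj (TL N) 1).hom) t)) = x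
      rw [ht, hsy, hy]
  · -- naturality
    intro W W' g
    set φ := ProjectiveResolution.lift g (projectiveResolution W) (projectiveResolution W')
      with hφ
    have hα := ProjectiveResolution.isoLeftDerivedObj_hom_naturality g
      (projectiveResolution W) (projectiveResolution W') φ (by rw [hφ]; exact ProjectiveResolution.lift_commutes_zero _ _ _) (TL N) 1
    simp only [Functor.comp_map, HomologicalComplex.homologyFunctor_map] at hα
    have hδ := HomologicalComplex.HomologySequence.δ_naturality
      (ShortComplex.Hom.mk (((TL K).mapHomologicalComplex _).map φ)
        (((TL F).mapHomologicalComplex _).map φ)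
        (((TL N).mapHomologicalComplex _).map φ)
        (NatTrans.mapHomologicalComplex_naturality ((tensoringLeft (ModuleCat.{0} R)).map i) φ)
        (NatTrans.mapHomologicalComplex_naturality ((tensoringLeft (ModuleCat.{0} R)).map p) φ)
        : Sg i p w W ⟶ Sg i p w W')
      (Sg_shortExact i p w hi hp hip W) (Sg_shortExact i p w hi hp hip W') 1 0 rfl
    have hβ := beta_W_naturality (R := R) K g
    show ((projectiveResolution W).isoLeftDerivedObj (TL N) 1).hom ≫
        delta i p w hi hp hip W ≫ beta K W ≫ (TL K).map g = _
    simp only [Category.assoc]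
    rw [← hβ]
    have hδ' : delta i p w hi hp hip W
          ≫ homologyMap (((TL K).mapHomologicalComplex _).map φ) 0
        = homologyMap (((TL N).mapHomologicalComplex _).map φ) 1
          ≫ delta i p w hi hp hip W' := hδ
    erw [reassoc_of% hδ']
    exact ((reassoc_of% hα) (delta i p w hi hp hip W' ≫ beta K W')).symm
end
end Core

/- STATEMENT 8: for a 2-presented module `N` and any family `(Z i)` of modules, the natural
map `Tor₁(N, ∏ Z i) → ∏ Tor₁(N, Z i)` (given componentwise by functoriality of `Tor₁` applied
to the projections) is an isomorphism. -/
theorem stmt8 (R : Type) [CommRing R] (N : Type) [AddCommGroup N] [Module R N]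
    (hN : TwoPresented R N) (ι : Type) (Z : ι → Type)
    [∀ i, AddCommGroup (Z i)] [∀ i, Module R (Z i)] :
    Function.Bijective
      (fun (x : tor1 (ModuleCat.of R N) (ModuleCat.of R (∀ i, Z i))) (i : ι) =>
        (((Tor (ModuleCat.{0} R) 1).obj (ModuleCat.of R N)).map
          (ModuleCat.ofHom (LinearMap.proj i : (∀ j, Z j) →ₗ[R] Z i)) x :
          tor1 (ModuleCat.of R N) (ModuleCat.of R (Z i)))) := by
  classical
  obtain ⟨n₀, n₁, n₂, f₂, f₁, f₀, hsurj, hex₁, hex₂⟩ := hN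
  -- the ModuleCat objects
  let Kc : ModuleCat.{0} R := ModuleCat.of R (LinearMap.ker f₀)
  let Fc : ModuleCat.{0} R := ModuleCat.of R (Fin n₀ → R)
  let Nc : ModuleCat.{0} R := ModuleCat.of R N
  let ic : Kc ⟶ Fc := ModuleCat.ofHom (LinearMap.ker f₀).subtype
  let pc : Fc ⟶ Nc := ModuleCat.ofHom f₀
  have w : ic ≫ pc = 0 := by
    apply ModuleCat.hom_ext; apply LinearMap.ext
    intro x
    exact x.2
  have hi : Function.Injective ic := Submodule.injective_subtype _
  have hip : Function.Exact ic pc := LinearMap.exact_subtype_ker_map f₀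
  haveI : Module.Flat R ↥Fc := by
    show Module.Flat R (Fin n₀ → R); infer_instance
  obtain ⟨u, hinj, hrange, hnat⟩ := core ic pc w hi hsurj hip
  -- presentation of the kernel
  have hker₁ : ∀ x, f₁ x ∈ LinearMap.ker f₀ := fun x => hex₁.apply_apply_eq_zero x
  let f₁' : (Fin n₁ → R) →ₗ[R] (LinearMap.ker f₀) := f₁.codRestrict _ hker₁
  have hsurj' : Function.Surjective f₁' := by
    rintro ⟨y, hy⟩
    obtain ⟨x, hx⟩ := (hex₁ y).mp hy
    exact ⟨x, Subtype.ext hx⟩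
  have hex' : Function.Exact f₂ f₁' := by
    intro z
    rw [← hex₂ z]
    constructor
    · intro h
      exact congrArg Subtype.val h
    · intro h
      exact Subtype.ext h
  have hKbij := piRightHom_bijective_of_presented Z f₂ f₁' hsurj' hex'
  have hFbij := piRightHom_bijective_free (R := R) Z n₀
  -- objects
  let W : ModuleCat.{0} R := ModuleCat.of R (∀ i, Z i)
  let Wi : ι → ModuleCat.{0} R := fun i => ModuleCat.of R (Z i)
  let gi : ∀ i, W ⟶ Wi i := fun i => ModuleCat.ofHom (LinearMap.proj i)
  -- key naturality, elementwise
  have key : ∀ (i : ι) (x : ((TL Nc).leftDerived 1).obj W),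
      u (Wi i) (((TL Nc).leftDerived 1).map (gi i) x)
        = LinearMap.lTensor (LinearMap.ker f₀) (LinearMap.proj i) (u W x) := by
    intro i x
    exact (ConcreteCategory.congr_hom (hnat W (Wi i) (gi i)) x).symm
  constructor
  · intro x y h
    apply hinj W
    apply hKbij.1
    ext i
    rw [piRightHom_eq_lTensor_proj, piRightHom_eq_lTensor_proj]
    rw [← key i x, ← key i y]
    exact congrArg (u (Wi i)) (congrFun h i)
  · intro t
    -- the family of kernel elements
    obtain ⟨s, hs⟩ := hKbij.2 (fun i => u (Wi i) (t i))
    have hs' : ∀ i, LinearMap.lTensor (LinearMap.ker f₀) (LinearMap.proj i) s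
        = u (Wi i) (t i) := by
      intro i
      rw [← piRightHom_eq_lTensor_proj]
      exact congrFun hs i
    have hzero : (((MonoidalCategory.tensoringLeft (ModuleCat.{0} R)).map ic).app W) s = 0 := by
      show LinearMap.rTensor (∀ i, Z i) ((LinearMap.ker f₀).subtype) s = 0
      apply hFbij.1
      rw [map_zero]
      ext i
      rw [piRightHom_rTensor_comm, piRightHom_eq_lTensor_proj, hs' i]
      have := (hrange (Wi i) (u (Wi i) (t i))).mp ⟨t i, rfl⟩
      exact this
    obtain ⟨x, hx⟩ := (hrange W s).mpr hzero
    refine ⟨x, ?_⟩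
    ext i
    apply hinj (Wi i)
    show u (Wi i) (((TL Nc).leftDerived 1).map (gi i) x) = u (Wi i) (t i)
    rw [key i x, hx, hs' i]
end PiTensorLemmas
end

section
/- Let R be a ring and N a class of finitely presented right R-modules. Suppose that for every direct system (X_i) of right R-modules with each X_i satisfying Ext¹_R(N, X_i) = 0 for all N ∈ N, also Ext¹_R(N, colim X_i) = 0 for all N ∈ N. Then every N ∈ N is 2-presented, i.e., R is right N-coherent. -/
open CategoryTheory

section helpers

variable {R : Type} [Ring R]

/-- Factor a linear map through a surjection whose kernel it kills. -/
theorem exists_factor_s10 {M₁ M₂ M₃ : Type} [AddCommGroup M₁] [AddCommGroup M₂] [AddCommGroup M₃]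
    [Module R M₁] [Module R M₂] [Module R M₃] (p : M₁ →ₗ[R] M₂) (hp : Function.Surjective p)
    (q : M₁ →ₗ[R] M₃) (h : ∀ x, p x = 0 → q x = 0) :
    ∃ r : M₂ →ₗ[R] M₃, ∀ x, r (p x) = q x := by
  have key : ∀ x y, p x = p y → q x = q y := by
    intro x y hxy
    have : q (x - y) = 0 := h _ (by rw [map_sub, hxy, sub_self])
    rw [map_sub, sub_eq_zero] at this; exact this
  set s := Function.surjInv hp with hs
  have hps : ∀ m, p (s m) = m := fun m => Function.surjInv_eq hp m
  refine ⟨⟨⟨fun m => q (s m), fun a b => ?_⟩, fun c a => ?_⟩, fun x => ?_⟩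
  · have : q (s (a + b)) = q (s a + s b) := key _ _ (by rw [map_add, hps, hps, hps])
    simpa using this
  · have : q (s (c • a)) = q (c • s a) := key _ _ (by rw [map_smul, hps, hps])
    simpa using this
  · exact key _ _ (hps (p x))

theorem subsingleton_of_isZero {M : ModuleCat ℤ} (h : Limits.IsZero M) : Subsingleton M := by
  constructor
  intro a b
  have h0 : (𝟙 M : M ⟶ M) = 0 := h.eq_of_src _ _
  have ha : (𝟙 M : M ⟶ M) a = (0 : M ⟶ M) a := by rw [h0]
  have hb : (𝟙 M : M ⟶ M) b = (0 : M ⟶ M) b := by rw [h0]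
  simpa using ha.trans hb.symm

end helpers

section extlemmas

variable {R : Type} [Ring R]

theorem ext1_subsingleton_iff (N' X : ModuleCat.{0} R) (P : ProjectiveResolution N') :
    Subsingleton (ext1 N' X) ↔
      ∀ g : P.complex.X 1 ⟶ X, (∀ z, g (P.complex.d 2 1 z) = 0) →
        ∃ h : P.complex.X 0 ⟶ X, ∀ y, h (P.complex.d 1 0 y) = g y := by
  have iso1 : ext1 N' X ≅ (P.complex.linearYonedaObj ℤ X).homology 1 := P.isoExt 1 X
  have step1 : Subsingleton (ext1 N' X) ↔
      Limits.IsZero ((P.complex.linearYonedaObj ℤ X).homology 1) := by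
    constructor
    · intro h
      exact (ModuleCat.isZero_of_subsingleton (ext1 N' X)).of_iso iso1.symm
    · intro h
      exact subsingleton_of_isZero (h.of_iso iso1)
  rw [step1, ← HomologicalComplex.exactAt_iff_isZero_homology,
    HomologicalComplex.exactAt_iff' _ 0 1 2 (by simp) (by simp),
    ShortComplex.moduleCat_exact_iff]
  have hg_eq : ∀ (g : P.complex.X 1 ⟶ X),
      @Eq (P.complex.X 2 ⟶ X) (((P.complex.linearYonedaObj ℤ X).sc' 0 1 2).g g)
        (P.complex.d 2 1 ≫ g) := fun g => rfl
  have hf_eq : ∀ (h : P.complex.X 0 ⟶ X),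
      @Eq (P.complex.X 1 ⟶ X) (((P.complex.linearYonedaObj ℤ X).sc' 0 1 2).f h)
        (P.complex.d 1 0 ≫ h) := fun h => rfl
  constructor
  · intro h g hg
    obtain ⟨h', hh'⟩ := h g (by
      show @Eq (P.complex.X 2 ⟶ X) _ 0
      rw [hg_eq g]
      apply ModuleCat.hom_ext
      apply LinearMap.ext
      intro z
      exact hg z)
    refine ⟨h', fun y => ?_⟩
    have t1 := hh'
    rw [hf_eq h'] at t1
    have t2 : @Eq (P.complex.X 1 ⟶ X) (P.complex.d 1 0 ≫ h') g := t1
    exact LinearMap.congr_fun (congrArg ModuleCat.Hom.hom t2) y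
  · intro h g hg
    obtain ⟨h', hh'⟩ := h g (fun z => by
      have t : @Eq (P.complex.X 2 ⟶ X) (P.complex.d 2 1 ≫ g) 0 := by rw [← hg_eq g]; exact hg
      exact LinearMap.congr_fun (congrArg ModuleCat.Hom.hom t) z)
    refine ⟨h', ?_⟩
    show @Eq (P.complex.X 1 ⟶ X) _ g
    rw [hf_eq h']
    apply ModuleCat.hom_ext
    apply LinearMap.ext
    intro y
    exact hh' y

theorem subsingleton_ext1_of_injective (N' X : ModuleCat.{0} R) [Injective X] :
    Subsingleton (ext1 N' X) := by
  obtain ⟨P⟩ := (inferInstance : HasProjectiveResolution N').out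
  rw [ext1_subsingleton_iff N' X P]
  intro g hg
  have hexact1 := (ShortComplex.moduleCat_exact_iff _).mp (P.exact_succ 0)
  set d10 : P.complex.X 1 →ₗ[R] P.complex.X 0 := (P.complex.d 1 0).hom with hd10
  set K' := LinearMap.range d10 with hK'
  obtain ⟨r, hr⟩ := exists_factor_s10 (d10.rangeRestrict) d10.surjective_rangeRestrict
    g.hom (by
      intro x hx
      have : d10 x = 0 := by
        have := congrArg (Subtype.val) hx
        simpa using this
      obtain ⟨z, hz⟩ := hexact1 x this
      rw [← hz]
      exact hg z)
  let i : ModuleCat.of R ↥K' ⟶ P.complex.X 0 := ModuleCat.ofHom K'.subtype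
  haveI : Mono i := (ModuleCat.mono_iff_injective i).mpr Subtype.val_injective
  let rr : ModuleCat.of R ↥K' ⟶ X := ModuleCat.ofHom r
  refine ⟨Injective.factorThru rr i, fun y => ?_⟩
  have hfac := Injective.comp_factorThru rr i
  have : Injective.factorThru rr i (d10 y) = Injective.factorThru rr i (i (d10.rangeRestrict y)) :=
    rfl
  refine Eq.trans this ?_
  have := LinearMap.congr_fun (congrArg ModuleCat.Hom.hom hfac) (d10.rangeRestrict y)
  exact this.trans (hr y)

theorem extend_of_subsingleton (N' X : ModuleCat.{0} R) (hsub : Subsingleton (ext1 N' X))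
    {n₀ : ℕ} (f₀ : (Fin n₀ → R) →ₗ[R] N') (hf₀ : Function.Surjective f₀)
    (u : ↥(LinearMap.ker f₀) →ₗ[R] X) :
    ∃ v : (Fin n₀ → R) →ₗ[R] X, ∀ k (hk : k ∈ LinearMap.ker f₀), v k = u ⟨k, hk⟩ := by
  obtain ⟨P⟩ := (inferInstance : HasProjectiveResolution N').out
  rw [ext1_subsingleton_iff N' X P] at hsub
  let ε : P.complex.X 0 →ₗ[R] N' := (P.π.f 0).hom
  have hε : Function.Surjective ε := by
    have : Epi (P.π.f 0) := inferInstance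
    exact (ModuleCat.epi_iff_surjective (P.π.f 0)).mp this
  have hex0 := (ShortComplex.moduleCat_exact_iff _).mp P.exact₀
  have hcomp0 : ∀ y, ε (P.complex.d 1 0 y) = 0 := fun y =>
    LinearMap.congr_fun (congrArg (fun (t : P.complex.X 1 ⟶ _) =>
      (t.hom : P.complex.X 1 →ₗ[R] N')) P.complex_d_comp_π_f_zero) y
  -- α : P₀ → F lifting ε over f₀
  let F0 := ModuleCat.of R (Fin n₀ → R)
  let fhom : F0 ⟶ N' := ModuleCat.ofHom f₀
  haveI : Epi fhom := (ModuleCat.epi_iff_surjective fhom).mpr hf₀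
  let εhom : P.complex.X 0 ⟶ N' := ModuleCat.ofHom ε
  let α : P.complex.X 0 ⟶ F0 := Projective.factorThru εhom fhom
  let αl : P.complex.X 0 →ₗ[R] (Fin n₀ → R) := α.hom
  have hα : ∀ x, f₀ (αl x) = ε x := fun x =>
    LinearMap.congr_fun (congrArg ModuleCat.Hom.hom (Projective.factorThru_comp εhom fhom)) x
  -- β : F → P₀ lifting f₀ over ε
  obtain ⟨β, hβ⟩ := Module.projective_lifting_property ε f₀ hε
  have hβ' : ∀ x, ε (β x) = f₀ x := fun x => LinearMap.congr_fun hβ x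
  -- αK : ker ε → ker f₀
  let αK : ↥(LinearMap.ker ε) →ₗ[R] ↥(LinearMap.ker f₀) :=
    αl.restrict (p := LinearMap.ker ε)
      (q := LinearMap.ker f₀) (fun x hx => by
        rw [LinearMap.mem_ker] at hx ⊢
        exact (hα x).trans hx)
  -- d' : P₁ → ker ε
  let d' : P.complex.X 1 →ₗ[R] ↥(LinearMap.ker ε) :=
    LinearMap.codRestrict (LinearMap.ker ε) (P.complex.d 1 0).hom (fun y => by
      rw [LinearMap.mem_ker]; exact hcomp0 y)
  let g : P.complex.X 1 ⟶ X := ModuleCat.ofHom ((u.comp αK).comp d')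
  have hg : ∀ z, g (P.complex.d 2 1 z) = 0 := by
    intro z
    have hdd0 : @Eq (P.complex.X 2 →ₗ[R] P.complex.X 0)
        (P.complex.d 2 1 ≫ P.complex.d 1 0).hom 0 := by rw [P.complex.d_comp_d 2 1 0]; rfl
    have hdd : P.complex.d 1 0 (P.complex.d 2 1 z) = 0 := LinearMap.congr_fun hdd0 z
    have hdz : d' (P.complex.d 2 1 z) = 0 := Subtype.ext hdd
    show (u.comp αK) (d' (P.complex.d 2 1 z)) = 0
    rw [hdz, map_zero]
  obtain ⟨h, hh⟩ := hsub g hg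
  have hhk : ∀ k (hk : k ∈ LinearMap.ker ε), h k = u (αK ⟨k, hk⟩) := by
    intro k hk
    obtain ⟨y, hy⟩ := hex0 k hk
    have h1 : h k = g y := by rw [← hy]; exact hh y
    have h2 : d' y = ⟨k, hk⟩ := Subtype.ext hy
    rw [h1]
    show (u.comp αK) (d' y) = _
    rw [h2]
    rfl
  -- ρ : F → ker f₀, x ↦ α β x - x
  let ρ : (Fin n₀ → R) →ₗ[R] ↥(LinearMap.ker f₀) :=
    LinearMap.codRestrict (LinearMap.ker f₀)
      (αl.comp β - LinearMap.id) (fun x => by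
        rw [LinearMap.mem_ker]
        show f₀ (αl (β x) - x) = 0
        rw [map_sub, hα, hβ', sub_self])
  refine ⟨((h.hom : P.complex.X 0 →ₗ[R] X).comp β) - u.comp ρ, fun k hk => ?_⟩
  have hβk : β k ∈ LinearMap.ker ε := by
    rw [LinearMap.mem_ker, hβ']
    exact hk
  have e1 : h (β k) = u ⟨αl (β k), by rw [LinearMap.mem_ker]; exact (hα _).trans hβk⟩ := by
    rw [hhk (β k) hβk]
    rfl
  have e2 : ρ k = ⟨αl (β k) - k, (ρ k).2⟩ := rfl
  show h (β k) - u (ρ k) = u ⟨k, hk⟩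
  rw [e1, e2, ← map_sub]
  congr 1
  apply Subtype.ext
  show αl (β k) - (αl (β k) - k) = k
  abel

/-- A product of copies of an injective module object is an injective object. -/
theorem pi_injective (E : ModuleCat.{0} R) [Injective E] (κ : Type) :
    Injective (ModuleCat.of R (κ → E)) := by
  apply Module.injective_object_of_injective_module (inj := ?_)
  apply Module.Baer.injective
  intro I g
  let inc : ModuleCat.of R ↥I ⟶ ModuleCat.of R R := ModuleCat.ofHom (Submodule.subtype I)
  haveI : Mono inc := (ModuleCat.mono_iff_injective inc).mpr Subtype.val_injective
  let gc : κ → (↥I →ₗ[R] E) := fun χ => (LinearMap.proj χ).comp g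
  let e : κ → (ModuleCat.of R R ⟶ E) := fun χ => Injective.factorThru (ModuleCat.ofHom (gc χ) : ModuleCat.of R ↥I ⟶ E) inc
  refine ⟨LinearMap.pi (fun χ => ((e χ).hom : R →ₗ[R] E)), fun x hx => ?_⟩
  funext χ
  show e χ x = g ⟨x, hx⟩ χ
  have := LinearMap.congr_fun (congrArg ModuleCat.Hom.hom (Injective.comp_factorThru (ModuleCat.ofHom (gc χ) : ModuleCat.of R ↥I ⟶ E) inc)) ⟨x, hx⟩
  exact this

end extlemmas

/- STATEMENT 10: if the vanishing of `Ext¹(N, -)` for all `N` in a class `𝓝` of finitely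
presented modules is preserved by direct limits, then every `N ∈ 𝓝` is 2-presented. -/
theorem stmt10 (R : Type) [Ring R] (𝓝 : ModuleCat.{0} R → Prop)
    (hfp : ∀ N : ModuleCat.{0} R, 𝓝 N → Module.FinitePresentation R N)
    (H : ∀ (ι : Type) [Preorder ι] [IsDirected ι (· ≤ ·)] [DecidableEq ι] [Nonempty ι]
      (X : ι → Type) [∀ i, AddCommGroup (X i)] [∀ i, Module R (X i)]
      (f : ∀ i j, i ≤ j → X i →ₗ[R] X j) [DirectedSystem X (fun i j h => f i j h)],
      (∀ i, ∀ N : ModuleCat.{0} R, 𝓝 N →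
        Subsingleton (ext1 N (ModuleCat.of R (X i)))) →
      ∀ N : ModuleCat.{0} R, 𝓝 N →
        Subsingleton (ext1 N (ModuleCat.of R (Module.DirectLimit X f)))) :
    ∀ N : ModuleCat.{0} R, 𝓝 N → TwoPresented R N := by
  intro N hN
  haveI := hfp N hN
  obtain ⟨n₀, f₀, hf₀⟩ := Module.Finite.exists_fin' R N
  have hKfg : (LinearMap.ker f₀).FG := Module.FinitePresentation.fg_ker f₀ hf₀
  set K := LinearMap.ker f₀ with hK
  haveI : Module.Finite R ↥K := Module.Finite.iff_fg.mpr hKfg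
  obtain ⟨n₁, g', hg'⟩ := Module.Finite.exists_fin' R ↥K
  set G := (Fin n₁ → R) with hG
  let g₀ : G →ₗ[R] (Fin n₀ → R) := K.subtype.comp g'
  set S := LinearMap.ker g₀ with hS
  have hkerg : ∀ x, g' x = 0 ↔ x ∈ S := by
    intro x
    rw [hS, LinearMap.mem_ker]
    constructor
    · intro h
      show K.subtype (g' x) = 0
      rw [h, map_zero]
    · intro h
      exact Subtype.val_injective h
  -- ==================== main step: S is finitely generated =================
  have hSfg : S.FG := by
    classical
    -- the directed index
    let ι' := {p : Submodule R G // p.FG ∧ p ≤ S}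
    haveI : IsDirected ι' (· ≤ ·) := ⟨fun a b =>
      ⟨⟨a.1 ⊔ b.1, a.2.1.sup b.2.1, sup_le a.2.2 b.2.2⟩,
        show a.1 ≤ a.1 ⊔ b.1 from le_sup_left, show b.1 ≤ a.1 ⊔ b.1 from le_sup_right⟩⟩
    haveI : Nonempty ι' := ⟨⟨⊥, Submodule.fg_bot, bot_le⟩⟩
    haveI : DecidableEq ι' := Classical.decEq _
    -- the injective container
    let A := DirectSum ι' (fun j => G ⧸ j.1)
    let AE := ModuleCat.of R A
    let E := Injective.under AE
    let ιA : AE ⟶ E := Injective.ι AE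
    have hιA : Function.Injective ιA := (ModuleCat.mono_iff_injective ιA).mp inferInstance
    -- the directed system of injectives
    let D : ι' → Type := fun j => (G ⧸ j.1 →ₗ[R] E) → E
    let q : ∀ i j : ι', i ≤ j → (G ⧸ i.1 →ₗ[R] G ⧸ j.1) := fun i j hij =>
      Submodule.mapQ i.1 j.1 LinearMap.id (by simpa using hij)
    have hq : ∀ (i j : ι') (hij : i ≤ j) (x : G),
        q i j hij (Submodule.Quotient.mk x) = Submodule.Quotient.mk x := by
      intro i j hij x
      simp [q, Submodule.mapQ_apply]
    let f : ∀ i j : ι', i ≤ j → (D i →ₗ[R] D j) := fun i j hij =>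
      LinearMap.funLeft R E (fun χ => χ.comp (q i j hij))
    haveI : DirectedSystem D (fun i j h => f i j h) := by
      constructor
      · intro i φ
        show φ ∘ _ = φ
        funext χ
        show φ (χ.comp (q i i le_rfl)) = φ χ
        congr 1
        apply LinearMap.ext
        intro x
        obtain ⟨y, rfl⟩ := Submodule.Quotient.mk_surjective _ x
        rw [LinearMap.comp_apply, hq i i le_rfl y]
      · intro k j i hij hjk φ
        funext χ
        show φ ((χ.comp (q j k hjk)).comp (q i j hij)) = φ (χ.comp (q i k (hij.trans hjk)))
        congr 1
        apply LinearMap.ext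
        intro x
        obtain ⟨y, rfl⟩ := Submodule.Quotient.mk_surjective _ x
        simp only [LinearMap.comp_apply]
        rw [hq i j hij y, hq j k hjk y, hq i k (hij.trans hjk) y]
    -- injectivity of the pieces
    have hvan : ∀ i, ∀ N' : ModuleCat.{0} R, 𝓝 N' →
        Subsingleton (ext1 N' (ModuleCat.of R (D i))) := by
      intro i N' hN'
      haveI : Injective (ModuleCat.of R ((G ⧸ i.1 →ₗ[R] E) → E)) := pi_injective E _
      exact subsingleton_ext1_of_injective N' _
    have hsub := H ι' D f hvan N hN
    set L := Module.DirectLimit D f with hL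
    let σ : ∀ j : ι', D j →ₗ[R] L := fun j => Module.DirectLimit.of R ι' D f j
    let e : ∀ j : ι', (G ⧸ j.1) →ₗ[R] D j := fun j => LinearMap.pi (fun χ => χ)
    have hnat : ∀ (i j : ι') (hij : i ≤ j) (x : G ⧸ i.1),
        f i j hij (e i x) = e j (q i j hij x) := by
      intro i j hij x
      funext χ
      rfl
    let jbot : ι' := ⟨⊥, Submodule.fg_bot, bot_le⟩
    have hbot : ∀ j : ι', jbot ≤ j := fun j => show (⊥ : Submodule R G) ≤ j.1 from bot_le
    let ψ : G →ₗ[R] L := ((σ jbot).comp (e jbot)).comp (Submodule.mkQ _)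
    have hψ : ∀ (j : ι') (x : G), ψ x = σ j (e j (Submodule.Quotient.mk x)) := by
      intro j x
      have h1 : σ j (f jbot j (hbot j) (e jbot (Submodule.Quotient.mk x)))
          = σ jbot (e jbot (Submodule.Quotient.mk x)) :=
        Module.DirectLimit.of_f (hij := hbot j) (x := e jbot (Submodule.Quotient.mk x))
      have h2 : f jbot j (hbot j) (e jbot (Submodule.Quotient.mk x))
          = e j (Submodule.Quotient.mk x) := by
        rw [hnat jbot j (hbot j), hq jbot j (hbot j) x]
      calc ψ x = σ jbot (e jbot (Submodule.Quotient.mk x)) := rfl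
        _ = σ j (e j (Submodule.Quotient.mk x)) := by rw [← h1, h2]
    have hψS : ∀ s ∈ S, ψ s = 0 := by
      intro s hs
      let js : ι' := ⟨Submodule.span R {s}, Submodule.fg_span_singleton s,
        (Submodule.span_singleton_le_iff_mem s S).mpr hs⟩
      rw [hψ js s]
      have : (Submodule.Quotient.mk s : G ⧸ js.1) = 0 :=
        (Submodule.Quotient.mk_eq_zero _).mpr (Submodule.mem_span_singleton_self s)
      rw [this, map_zero, map_zero]
    -- the map u : K → L and its extension v : F → L
    obtain ⟨u, hu⟩ := exists_factor_s10 g' hg' ψ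
      (fun x hx => hψS x ((hkerg x).mp hx))
    obtain ⟨v, hv⟩ := extend_of_subsingleton N (ModuleCat.of R L) hsub f₀ hf₀ u
    have hvg : ∀ x : G, v (g₀ x) = ψ x := by
      intro x
      have hmem : g₀ x ∈ K := (g' x).2
      have : v (g₀ x) = u ⟨g₀ x, hmem⟩ := hv _ hmem
      rw [this]
      have : (⟨g₀ x, hmem⟩ : ↥K) = g' x := Subtype.ext rfl
      rw [this, hu]
    -- factor v through a finite stage
    have hex : ∀ i : Fin n₀, ∃ (j : ι') (d : D j), σ j d = v ((Pi.basisFun R (Fin n₀)) i) :=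
      fun i => Module.DirectLimit.exists_of _
    choose jv dv hdv using hex
    obtain ⟨j₀, hj₀⟩ := Finset.exists_le (Finset.image jv Finset.univ)
    have hjv : ∀ i, jv i ≤ j₀ := fun i => hj₀ _ (Finset.mem_image_of_mem jv (Finset.mem_univ i))
    let w : (Fin n₀ → R) →ₗ[R] D j₀ :=
      (Pi.basisFun R (Fin n₀)).constr ℕ (fun i => f (jv i) j₀ (hjv i) (dv i))
    have hw : (σ j₀).comp w = v := by
      apply (Pi.basisFun R (Fin n₀)).ext
      intro i
      rw [LinearMap.comp_apply]
      show σ j₀ (w _) = _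
      rw [show w ((Pi.basisFun R (Fin n₀)) i) = f (jv i) j₀ (hjv i) (dv i) from
        (Pi.basisFun R (Fin n₀)).constr_basis ℕ _ i]
      rw [show σ j₀ (f (jv i) j₀ (hjv i) (dv i)) = σ (jv i) (dv i) from
        Module.DirectLimit.of_f (hij := hjv i) (x := dv i)]
      exact hdv i
    have hw' : ∀ x, σ j₀ (w x) = v x := fun x => LinearMap.congr_fun hw x
    -- compare the two maps G → D j₀ in the limit
    have hcmp : ∀ i : Fin n₁, ∃ (j : ι') (hj : j₀ ≤ j),
        f j₀ j hj (w (g₀ ((Pi.basisFun R (Fin n₁)) i))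
          - e j₀ (Submodule.Quotient.mk ((Pi.basisFun R (Fin n₁)) i))) = 0 := by
      intro i
      set x := (Pi.basisFun R (Fin n₁)) i
      have h0 : σ j₀ (w (g₀ x) - e j₀ (Submodule.Quotient.mk x)) = 0 := by
        rw [map_sub, hw', hvg, hψ j₀, sub_self]
      exact Module.DirectLimit.of.zero_exact h0
    choose jz hjz hz using hcmp
    obtain ⟨j₁, hj₁⟩ := Finset.exists_le (insert j₀ (Finset.image jz Finset.univ))
    have hj₀₁ : j₀ ≤ j₁ := hj₁ _ (Finset.mem_insert_self _ _)
    have hjz₁ : ∀ i, jz i ≤ j₁ := fun i =>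
      hj₁ _ (Finset.mem_insert_of_mem (Finset.mem_image_of_mem jz (Finset.mem_univ i)))
    -- the two maps G →ₗ D j₁ agree
    have hT : ((f j₀ j₁ hj₀₁).comp (w.comp g₀))
        = (e j₁).comp (Submodule.mkQ j₁.1) := by
      apply (Pi.basisFun R (Fin n₁)).ext
      intro i
      set x := (Pi.basisFun R (Fin n₁)) i with hx
      have h1 : f j₀ j₁ hj₀₁ (w (g₀ x) - e j₀ (Submodule.Quotient.mk x)) = 0 := by
        have h1a := DirectedSystem.map_map (f := fun i j h => (f i j h : D i → D j))
          (hjz i) (hjz₁ i) (w (g₀ x) - e j₀ (Submodule.Quotient.mk x))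
        rw [hz i, map_zero] at h1a
        exact h1a.symm
      rw [map_sub, sub_eq_zero] at h1
      show f j₀ j₁ hj₀₁ (w (g₀ x)) = e j₁ (Submodule.mkQ j₁.1 x)
      calc f j₀ j₁ hj₀₁ (w (g₀ x))
          = f j₀ j₁ hj₀₁ (e j₀ (Submodule.Quotient.mk x)) := h1
        _ = e j₁ (q j₀ j₁ hj₀₁ (Submodule.Quotient.mk x)) := hnat j₀ j₁ hj₀₁ _
        _ = e j₁ (Submodule.Quotient.mk x) := by rw [hq j₀ j₁ hj₀₁ x]
        _ = e j₁ (Submodule.mkQ j₁.1 x) := rfl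
    -- conclude S ≤ j₁.1
    have hfin : S ≤ j₁.1 := by
      intro s hs
      have h1 : g₀ s = 0 := hs
      have h2 : ((f j₀ j₁ hj₀₁).comp (w.comp g₀)) s = 0 := by
        rw [LinearMap.comp_apply, LinearMap.comp_apply, h1, map_zero, map_zero]
      rw [hT] at h2
      have h3 : e j₁ (Submodule.Quotient.mk s) = 0 := h2
      -- apply at the character χ
      let χ : (G ⧸ j₁.1) →ₗ[R] E := (ιA.hom : A →ₗ[R] E).comp (DirectSum.lof R ι' (fun j => G ⧸ j.1) j₁)
      have hχ : Function.Injective χ := by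
        rw [LinearMap.coe_comp]
        apply Function.Injective.comp hιA
        intro a b hab
        have hab' : @Eq A (DirectSum.lof R ι' (fun j => G ⧸ j.1) j₁ a)
            (DirectSum.lof R ι' (fun j => G ⧸ j.1) j₁ b) := hab
        have := DFunLike.congr_fun hab' j₁
        rwa [DirectSum.lof_apply, DirectSum.lof_apply] at this
      have h4 : χ (Submodule.Quotient.mk s) = 0 := congrFun h3 χ
      have h5 : (Submodule.Quotient.mk s : G ⧸ j₁.1) = 0 := hχ (by rw [h4, map_zero])
      exact (Submodule.Quotient.mk_eq_zero _).mp h5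
    have : S = j₁.1 := le_antisymm hfin j₁.2.2
    rw [this]
    exact j₁.2.1
  -- ==================== assemble the 2-presentation =================
  haveI : Module.Finite R ↥S := Module.Finite.iff_fg.mpr hSfg
  obtain ⟨n₂, h', hh'⟩ := Module.Finite.exists_fin' R ↥S
  refine ⟨n₀, n₁, n₂, S.subtype.comp h', g₀, f₀, hf₀, ?_, ?_⟩
  · rw [LinearMap.exact_iff]
    show K = LinearMap.range (K.subtype.comp g')
    rw [LinearMap.range_comp, LinearMap.range_eq_top.mpr hg', Submodule.map_top,
      Submodule.range_subtype]
  · rw [LinearMap.exact_iff]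
    show S = LinearMap.range (S.subtype.comp h')
    rw [LinearMap.range_comp, LinearMap.range_eq_top.mpr hh', Submodule.map_top,
      Submodule.range_subtype]
end

section
/- Let R be a ring and N a class of finitely presented right R-modules. Suppose that for every family (Z_i) of left R-modules with Tor₁^R(N, Z_i) = 0 for all N ∈ N and all i, also Tor₁^R(N, ∏ Z_i) = 0 for all N ∈ N. Then every N ∈ N is 2-presented. -/
open CategoryTheory

section Auxiliary

open MonoidalCategory LinearMap TensorProduct

variable {R : Type} [CommRing R]

/-- Naturality of the canonical map `M ⊗ R^I → M^I`. -/
lemma chi_nat {M N' : Type} [AddCommGroup M] [Module R M] [AddCommGroup N'] [Module R N']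
    (I : Type) (φ : M →ₗ[R] N') (x : M ⊗[R] (I → R)) :
    piScalarRightHom R R N' I (rTensor (I → R) φ x)
      = ⇑φ ∘ (piScalarRightHom R R M I x) := by
  induction x using TensorProduct.induction_on with
  | zero => funext i; simp
  | tmul m f => funext i; simp
  | add a b ha hb => funext i; simp only [map_add, Pi.add_apply, ha, hb, Function.comp_apply]

/-- Injectivity of the canonical map `F ⊗ R^I → F^I` for finite free `F`. -/
lemma chi_free_inj (n : ℕ) (I : Type) :
    Function.Injective (piScalarRightHom R R (Fin n → R) I) := by
  set Z := I → R with hZ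
  let e : ((Fin n → R) ⊗[R] Z) ≃ₗ[R] (Fin n → Z) :=
    (TensorProduct.comm R _ _).trans (TensorProduct.piScalarRight R R Z (Fin n))
  have h : ∀ x : (Fin n → R) ⊗[R] Z,
      piScalarRightHom R R (Fin n → R) I x = fun i j => e x j i := by
    intro x
    induction x using TensorProduct.induction_on with
    | zero =>
        funext i; funext j
        rw [map_zero, e.map_zero]; rfl
    | tmul a f =>
        funext i; funext j
        rw [piScalarRightHom_tmul]
        show f i * a j = e (a ⊗ₜ[R] f) j i
        simp only [e, LinearEquiv.trans_apply, TensorProduct.comm_tmul, piScalarRight_apply,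
          piScalarRightHom_tmul]
        show f i * a j = a j * f i
        ring
    | add a b ha hb =>
        funext i; funext j
        simp only [map_add, Pi.add_apply, ha, hb]
        rfl
  intro a b hab
  apply e.injective
  funext j
  funext i
  exact congrFun (congrFun ((h a).symm.trans ((hab.trans (h b)))) i) j

/-- Elementary dimension shift: injectivity of `N ⊗ S → N ⊗ P₀` for `S = range d₁`,
given exactness of `N ⊗ P₂ → N ⊗ P₁ → N ⊗ P₀`. -/
lemma inj_lTensor_of_exact
    {Nm P0 P1 P2 : Type} [AddCommGroup Nm] [Module R Nm] [AddCommGroup P0] [Module R P0]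
    [AddCommGroup P1] [Module R P1] [AddCommGroup P2] [Module R P2]
    (d1 : P1 →ₗ[R] P0) (d2 : P2 →ₗ[R] P1) (hd : d1 ∘ₗ d2 = 0)
    (hex : ∀ u : Nm ⊗[R] P1, lTensor Nm d1 u = 0 → ∃ v, lTensor Nm d2 v = u) :
    Function.Injective (lTensor Nm (LinearMap.range d1).subtype) := by
  have hpd : (d1.rangeRestrict) ∘ₗ d2 = 0 := by
    apply LinearMap.ext; intro x
    apply Subtype.ext
    simpa using LinearMap.congr_fun hd x
  have hfact : lTensor Nm d1 =
      lTensor Nm (LinearMap.range d1).subtype ∘ₗ lTensor Nm d1.rangeRestrict := by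
    rw [← lTensor_comp]; rfl
  rw [injective_iff_map_eq_zero]
  intro s hs
  obtain ⟨u, hu⟩ := lTensor_surjective Nm d1.surjective_rangeRestrict s
  have hu0 : lTensor Nm d1 u = 0 := by
    rw [hfact, LinearMap.comp_apply, hu, hs]
  obtain ⟨v, hv⟩ := hex u hu0
  rw [← hu, ← hv, ← LinearMap.comp_apply, ← lTensor_comp, hpd]
  simp

/-- The balance-of-Tor diagram chase. -/
lemma lemB {K F N S P Z : Type}
    [AddCommGroup K] [Module R K] [AddCommGroup F] [Module R F]
    [AddCommGroup N] [Module R N] [AddCommGroup S] [Module R S]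
    [AddCommGroup P] [Module R P] [AddCommGroup Z] [Module R Z]
    [Module.Flat R F] [Module.Flat R P]
    (i : K →ₗ[R] F) (hi : Function.Injective i)
    (q : F →ₗ[R] N) (hq : Function.Surjective q) (hiq : Function.Exact i q)
    (ι : S →ₗ[R] P) (π : P →ₗ[R] Z) (hπ : Function.Surjective π)
    (hιπ : Function.Exact ι π)
    (h1 : Function.Injective (lTensor N ι)) :
    Function.Injective (rTensor Z i) := by
  rw [injective_iff_map_eq_zero]
  intro x hx
  obtain ⟨y, rfl⟩ := lTensor_surjective K hπ x
  have hy' : lTensor F π (rTensor P i y) = 0 := by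
    rw [← LinearMap.comp_apply, lTensor_comp_rTensor, ← rTensor_comp_lTensor,
      LinearMap.comp_apply, hx]
  have hFex : Function.Exact (lTensor F ι) (lTensor F π) := Module.Flat.lTensor_exact F hιπ
  obtain ⟨s, hs⟩ := (hFex _).mp hy'
  have hq0 : q ∘ₗ i = 0 := by ext k; exact hiq.apply_apply_eq_zero k
  have hsq : lTensor N ι (rTensor S q s) = 0 := by
    rw [← LinearMap.comp_apply, lTensor_comp_rTensor, ← rTensor_comp_lTensor,
      LinearMap.comp_apply, hs, ← LinearMap.comp_apply, ← rTensor_comp, hq0]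
    simp
  have hs0 : rTensor S q s = 0 := h1 (by rw [hsq, map_zero])
  have hKSex : Function.Exact (rTensor S i) (rTensor S q) := rTensor_exact S hiq hq
  obtain ⟨t, ht⟩ := (hKSex _).mp hs0
  have hinj : Function.Injective (rTensor P i) :=
    Module.Flat.rTensor_preserves_injective_linearMap i hi
  have hyt : y = lTensor K ι t := by
    apply hinj
    rw [← hs, ← ht, ← LinearMap.comp_apply, lTensor_comp_rTensor,
      ← LinearMap.comp_apply, rTensor_comp_lTensor]
  have hπι : π ∘ₗ ι = 0 := by ext z; exact hιπ.apply_apply_eq_zero z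
  rw [hyt, ← LinearMap.comp_apply, ← lTensor_comp, hπι]
  simp

lemma subsingleton_of_iso {X Y : ModuleCat.{0} R} (e : X ≅ Y) (h : Subsingleton X) :
    Subsingleton Y := by
  haveI := h
  exact (e.symm.toLinearEquiv.toEquiv).subsingleton

lemma tor1_subsingleton_of_projective (N Y : ModuleCat.{0} R) [Projective Y] :
    Subsingleton (tor1 N Y) := by
  have h := CategoryTheory.isZero_Tor_succ_of_projective (ModuleCat.{0} R) N Y 0
  haveI : Subsingleton (ModuleCat.of R PUnit) := by
    show Subsingleton PUnit; infer_instance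
  exact subsingleton_of_iso
    (h.iso (ModuleCat.isZero_of_subsingleton (ModuleCat.of R PUnit))).symm
    (by infer_instance)

lemma tor_vanish_gives (N Z' : ModuleCat.{0} R) (h : Subsingleton (tor1 N Z')) :
    ∃ (P : ModuleCat.{0} R) (_ : Module.Flat R P) (S : Submodule R P) (π : P →ₗ[R] Z'),
      Function.Surjective π ∧ Function.Exact S.subtype π ∧
      Function.Injective (lTensor (N : Type) S.subtype) := by
  obtain ⟨Q⟩ := HasProjectiveResolution.out (Z := Z')
  let F : ModuleCat.{0} R ⥤ ModuleCat.{0} R := (tensoringLeft (ModuleCat.{0} R)).obj N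
  let C1 := (F.mapHomologicalComplex (ComplexShape.down ℕ)).obj Q.complex
  have e1 : tor1 N Z' ≅ (HomologicalComplex.homologyFunctor _ _ 1).obj C1 :=
    Q.isoLeftDerivedObj F 1
  have h2 : Subsingleton ((HomologicalComplex.homologyFunctor (ModuleCat.{0} R) _ 1).obj C1) :=
    subsingleton_of_iso e1 h
  have h3 : C1.ExactAt 1 := by
    rw [HomologicalComplex.exactAt_iff_isZero_homology]
    haveI : Subsingleton ((C1.homology 1 : ModuleCat R) : Type) := h2
    exact ModuleCat.isZero_of_subsingleton _
  have h4 : (C1.sc' 2 1 0).Exact :=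
    (C1.exactAt_iff' (i := 2) (j := 1) 0 (by simp) (by simp)).mp h3
  rw [ShortComplex.moduleCat_exact_iff] at h4
  have hProjP : Projective (Q.complex.X 0) := Q.projective 0
  have hproj : Module.Projective R (Q.complex.X 0) := by
    rw [IsProjective.iff_projective (R := R) (P := ((Q.complex.X 0 : ModuleCat R) : Type))]
    exact hProjP
  haveI := hproj
  have hflat : Module.Flat R (Q.complex.X 0) := Module.Flat.of_projective
  have hd : ((Q.complex.d 1 0).hom : (Q.complex.X 1 : Type) →ₗ[R] Q.complex.X 0) ∘ₗ
      ((Q.complex.d 2 1).hom : (Q.complex.X 2 : Type) →ₗ[R] Q.complex.X 1) = 0 := by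
    rw [← ModuleCat.hom_comp, Q.complex.d_comp_d, ModuleCat.hom_zero]
  have hπ : Function.Surjective (Q.π.f 0) := by
    rw [← ModuleCat.epi_iff_surjective]
    infer_instance
  have hexact : (ShortComplex.mk (Q.complex.d 1 0) (Q.π.f 0)
      Q.complex_d_comp_π_f_zero).Exact :=
    ShortComplex.exact_of_g_is_cokernel _ Q.isColimitCokernelCofork
  rw [ShortComplex.moduleCat_exact_iff_range_eq_ker] at hexact
  refine ⟨Q.complex.X 0, hflat, LinearMap.range (Q.complex.d 1 0).hom, (Q.π.f 0).hom, hπ, ?_, ?_⟩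
  · intro y
    constructor
    · intro hy
      have hy' : y ∈ LinearMap.range ((Q.complex.d 1 0).hom :
          (Q.complex.X 1 : Type) →ₗ[R] Q.complex.X 0) := by rw [hexact]; exact hy
      exact ⟨⟨y, hy'⟩, rfl⟩
    · rintro ⟨⟨y, hy⟩, rfl⟩
      have : y ∈ LinearMap.ker ((Q.π.f 0).hom :
          ((Q.complex.X 0 : ModuleCat R) : Type) →ₗ[R] Z') := by rw [← hexact]; exact hy
      exact this
  · exact inj_lTensor_of_exact (Q.complex.d 1 0).hom (Q.complex.d 2 1).hom hd (fun u hu => h4 u hu)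

end Auxiliary

open TensorProduct LinearMap

set_option synthInstance.maxHeartbeats 1000000
set_option maxHeartbeats 1000000

/- STATEMENT 11: if the vanishing of `Tor₁(N, -)` for all `N` in a class `𝓝` of finitely
presented modules is preserved by direct products, then every `N ∈ 𝓝` is 2-presented. -/
theorem stmt11 (R : Type) [CommRing R] (𝓝 : ModuleCat.{0} R → Prop)
    (hfp : ∀ N : ModuleCat.{0} R, 𝓝 N → Module.FinitePresentation R N)
    (H : ∀ (ι : Type) (Z : ι → Type) [∀ i, AddCommGroup (Z i)] [∀ i, Module R (Z i)],
      (∀ N : ModuleCat.{0} R, 𝓝 N → ∀ i, Subsingleton (tor1 N (ModuleCat.of R (Z i)))) →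
      ∀ N : ModuleCat.{0} R, 𝓝 N → Subsingleton (tor1 N (ModuleCat.of R (∀ i, Z i)))) :
    ∀ N : ModuleCat.{0} R, 𝓝 N → TwoPresented R N := by
  classical
  intro N hN
  haveI fp := hfp N hN
  haveI : Module.Finite R N := inferInstance
  obtain ⟨n₀, f₀, hf₀⟩ := Module.Finite.exists_fin' R N
  set K := LinearMap.ker f₀ with hK
  have hKfg : K.FG := Module.FinitePresentation.fg_ker f₀ hf₀
  haveI : Module.Finite R K := Module.Finite.iff_fg.mpr hKfg
  obtain ⟨n₁, g, hg⟩ := Module.Finite.exists_fin' R K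
  haveI : Projective (ModuleCat.of R R) :=
    ModuleCat.projective_of_free (Module.Basis.singleton Unit R)
  -- key injectivity of the canonical map `K ⊗ R^I → K^I`
  have key : ∀ I : Type,
      Function.Injective (TensorProduct.piScalarRightHom R R (↥K) I) := by
    intro I
    have hprem : ∀ N' : ModuleCat.{0} R, 𝓝 N' → ∀ _i : I,
        Subsingleton (tor1 N' (ModuleCat.of R R)) :=
      fun N' _ _ => tor1_subsingleton_of_projective N' _
    have htor : Subsingleton (tor1 N (ModuleCat.of R (∀ _ : I, R))) :=
      H I (fun _ => R) hprem N hN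
    obtain ⟨P, hflat, S, π, hπs, hπe, hinj⟩ :=
      tor_vanish_gives N (ModuleCat.of R (∀ _ : I, R)) htor
    haveI := hflat
    have hrT : Function.Injective (LinearMap.rTensor (I → R) K.subtype) :=
      lemB K.subtype (Submodule.injective_subtype K) f₀ hf₀
        (LinearMap.exact_subtype_ker_map f₀) S.subtype π hπs hπe hinj
    intro a b hab
    apply hrT
    apply chi_free_inj n₀ I
    rw [chi_nat, chi_nat, hab]
  -- Lenzing's argument: the kernel of `g` is finitely generated
  set L := LinearMap.ker g with hL
  have hLfg : L.FG := by
    set α : (Fin n₁ → R) ⊗[R] ((↥L) → R) :=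
      ∑ j : Fin n₁, (Pi.single j 1 : Fin n₁ → R) ⊗ₜ[R]
        (fun l : ↥L => (l : Fin n₁ → R) j) with hα_def
    have hα : TensorProduct.piScalarRightHom R R (Fin n₁ → R) (↥L) α
        = fun l : ↥L => (l : Fin n₁ → R) := by
      funext l
      rw [hα_def, map_sum]
      funext j'
      simp only [Finset.sum_apply, TensorProduct.piScalarRightHom_tmul, Pi.smul_apply,
        smul_eq_mul, Pi.single_apply, mul_ite, mul_one, mul_zero]
      rw [Finset.sum_ite_eq]
      simp
    have hβ : LinearMap.rTensor ((↥L) → R) g α = 0 := by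
      apply key (↥L)
      rw [chi_nat, hα, map_zero]
      funext l
      show g (l : Fin n₁ → R) = 0
      exact l.2
    have hex : Function.Exact (LinearMap.rTensor ((↥L) → R) L.subtype)
        (LinearMap.rTensor ((↥L) → R) g) :=
      rTensor_exact _ (LinearMap.exact_subtype_ker_map g) hg
    obtain ⟨γ, hγ⟩ := (hex α).mp hβ
    obtain ⟨T, hT⟩ := TensorProduct.exists_finset γ
    refine ⟨T.image (fun p => ((p.1 : ↥L) : Fin n₁ → R)), ?_⟩
    apply le_antisymm
    · rw [Submodule.span_le]
      rintro x hx
      simp only [Finset.coe_image, Set.mem_image, Finset.mem_coe] at hx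
      obtain ⟨p, _, rfl⟩ := hx
      exact (p.1).2
    · intro x hx
      have h1 : TensorProduct.piScalarRightHom R R (Fin n₁ → R) (↥L) α
          = ⇑L.subtype ∘ TensorProduct.piScalarRightHom R R (↥L) (↥L) γ := by
        rw [← hγ, chi_nat]
      have h2 : x = L.subtype (TensorProduct.piScalarRightHom R R (↥L) (↥L) γ ⟨x, hx⟩) :=
        congrFun (hα.symm.trans h1) ⟨x, hx⟩
      rw [hT, map_sum] at h2
      have h3 : x = ∑ p ∈ T, p.2 ⟨x, hx⟩ • ((p.1 : ↥L) : Fin n₁ → R) := by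
        conv_lhs => rw [h2]
        rw [Finset.sum_apply, map_sum]
        apply Finset.sum_congr rfl
        intro p _
        simp only [TensorProduct.piScalarRightHom_tmul]
        rfl
      rw [h3]
      apply Submodule.sum_mem
      intro p hp
      apply Submodule.smul_mem
      apply Submodule.subset_span
      simp only [Finset.coe_image, Set.mem_image, Finset.mem_coe]
      exact ⟨p, hp, rfl⟩
  haveI : Module.Finite R L := Module.Finite.iff_fg.mpr hLfg
  obtain ⟨n₂, h₂, hh₂⟩ := Module.Finite.exists_fin' R (↥L)
  refine ⟨n₀, n₁, n₂, L.subtype ∘ₗ h₂, K.subtype ∘ₗ g, f₀, hf₀, ?_, ?_⟩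
  · intro y
    constructor
    · intro hy
      obtain ⟨k, hk⟩ := hg ⟨y, hy⟩
      refine ⟨k, ?_⟩
      show K.subtype (g k) = y
      rw [hk]
      rfl
    · rintro ⟨k, rfl⟩
      exact (g k).2
  · intro y
    constructor
    · intro hy
      have hy' : g y = 0 := by
        apply Submodule.injective_subtype K
        simpa using hy
      obtain ⟨w, hw⟩ := hh₂ ⟨y, hy'⟩
      refine ⟨w, ?_⟩
      show L.subtype (h₂ w) = y
      rw [hw]
      rfl
    · rintro ⟨w, rfl⟩
      show K.subtype (g (L.subtype (h₂ w))) = 0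
      have : g (L.subtype (h₂ w)) = 0 := (h₂ w).2
      rw [this, map_zero]
end

section
/- Let R be a ring. Every right R-module Z satisfies Ext¹_R(Z, S) = 0 for all simple right R-modules S (i.e., every right R-module is coneat-flat) if and only if every simple right R-module is injective (R is a right V-ring). -/
open CategoryTheory

section Aux
variable {R : Type} [Ring R]

lemma moduleCat_subsingleton_iff_isZero {A : Type} [Ring A] (M : ModuleCat A) :
    Subsingleton M ↔ Limits.IsZero M := by
  constructor
  · intro h; exact ModuleCat.isZero_of_subsingleton M
  · intro h
    refine ⟨fun x y => ?_⟩
    have : (𝟙 M : M ⟶ M) = 0 := h.eq_of_src _ _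
    calc x = (𝟙 M : M ⟶ M) x := rfl
    _ = (0 : M ⟶ M) x := by rw [this]
    _ = (𝟙 M : M ⟶ M) y := by rw [this]; rfl
    _ = y := rfl

lemma bridge (Z S : ModuleCat.{0} R) (P : ProjectiveResolution Z) :
    Subsingleton (ext1 Z S) ↔
      ∀ (f : P.complex.X 1 ⟶ S), P.complex.d 2 1 ≫ f = 0 →
        ∃ g : P.complex.X 0 ⟶ S, P.complex.d 1 0 ≫ g = f := by
  have e := (P.isoExt (R := ℤ) 1 S)
  rw [moduleCat_subsingleton_iff_isZero]
  have h0 : Limits.IsZero (ext1 Z S) ↔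
      Limits.IsZero ((P.complex.linearYonedaObj ℤ S).homology 1) :=
    ⟨fun h => h.of_iso e.symm, fun h => h.of_iso e⟩
  rw [h0, ← HomologicalComplex.exactAt_iff_isZero_homology,
    (P.complex.linearYonedaObj ℤ S).exactAt_iff' 0 1 2 (by simp) (by simp),
    ShortComplex.moduleCat_exact_iff]
  constructor
  · intro h f hf
    obtain ⟨g, hg⟩ := h f (by
      exact hf)
    refine ⟨g, ?_⟩
    exact hg
  · intro h f hf
    obtain ⟨g, hg⟩ := h f (by
      exact hf)
    refine ⟨g, ?_⟩
    exact hg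

lemma dir_inj_to_ext (S : ModuleCat.{0} R) (hS : Module.Injective R S)
    (Z : ModuleCat.{0} R) : Subsingleton (ext1 Z S) := by
  obtain ⟨P⟩ : Nonempty (ProjectiveResolution Z) := ⟨(HasProjectiveResolution.out).some⟩
  rw [bridge Z S P]
  intro f hf
  set d1 : P.complex.X 1 →ₗ[R] P.complex.X 0 := (P.complex.d 1 0).hom with hd1
  -- exactness at 1
  have hex := ((P.complex.exactAt_iff' 2 1 0 (by simp) (by simp)).1
    (P.complex_exactAt_succ 0))
  rw [ShortComplex.moduleCat_exact_iff] at hex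
  have hker : LinearMap.ker d1 ≤ LinearMap.ker f.hom := by
    intro x hx
    obtain ⟨y, hy⟩ := hex x hx
    have : f (P.complex.d 2 1 y) = 0 := congrArg (fun h => h.hom y) hf
    rw [← hy]; exact this
  let e := LinearMap.quotKerEquivRange d1
  let f' : (P.complex.X 1 ⧸ LinearMap.ker d1) →ₗ[R] S :=
    Submodule.liftQ (LinearMap.ker d1) f.hom hker
  let g₀ : LinearMap.range d1 →ₗ[R] S := f' ∘ₗ (e.symm : _ →ₗ[R] _)
  obtain ⟨g, hg⟩ := hS.out (LinearMap.range d1).subtype (Submodule.injective_subtype _) g₀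
  refine ⟨ModuleCat.ofHom g, ?_⟩
  ext x
  have h1 : g (d1 x) = g₀ ⟨d1 x, LinearMap.mem_range_self d1 x⟩ :=
    hg ⟨d1 x, LinearMap.mem_range_self d1 x⟩
  have h2 : e (Submodule.Quotient.mk x) = ⟨d1 x, LinearMap.mem_range_self d1 x⟩ := rfl
  show g (d1 x) = f x
  rw [h1]
  show f' (e.symm ⟨d1 x, _⟩) = f x
  rw [← h2, LinearEquiv.symm_apply_apply]
  exact Submodule.liftQ_apply _ f.hom x

lemma dir_ext_to_inj (S : ModuleCat.{0} R)
    (h : ∀ Z : ModuleCat.{0} R, Subsingleton (ext1 Z S)) : Module.Injective R S := by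
  constructor
  intro X Y _ _ _ _ f hf g
  let Z : ModuleCat.{0} R := ModuleCat.of R (Y ⧸ LinearMap.range f)
  obtain ⟨P⟩ : Nonempty (ProjectiveResolution Z) := ⟨(HasProjectiveResolution.out).some⟩
  have hπ0 : Function.Surjective (P.π.f 0) := (ModuleCat.epi_iff_surjective _).1 inferInstance
  have hmkQ : Epi (ModuleCat.ofHom (LinearMap.range f).mkQ : ModuleCat.of R Y ⟶ Z) :=
    (ModuleCat.epi_iff_surjective _).2 (Submodule.mkQ_surjective _)
  let π : P.complex.X 0 ⟶ ModuleCat.of R Y :=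
    @Projective.factorThru _ _ _ _ _ _ (P.π.f 0) (ModuleCat.ofHom (LinearMap.range f).mkQ : ModuleCat.of R Y ⟶ Z) hmkQ
  let π' : P.complex.X 0 →ₗ[R] Y := π.hom
  have hπ : π ≫ (ModuleCat.ofHom (LinearMap.range f).mkQ : ModuleCat.of R Y ⟶ Z) = P.π.f 0 :=
    @Projective.factorThru_comp _ _ _ _ _ _ _ _ hmkQ
  have hπ' : ∀ p, (LinearMap.range f).mkQ (π' p) = P.π.f 0 p := fun p =>
    congrArg (fun h => h.hom p) hπ
  have h0 := P.exact₀
  rw [ShortComplex.moduleCat_exact_iff] at h0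
  let d10 : P.complex.X 1 →ₗ[R] P.complex.X 0 := (P.complex.d 1 0).hom
  let t : P.complex.X 1 →ₗ[R] Y := π' ∘ₗ d10
  have hdπ : ∀ q, P.π.f 0 (d10 q) = 0 := fun q =>
    congrArg (fun h => h.hom q) P.complex_d_comp_π_f_zero
  have ht : ∀ q, t q ∈ LinearMap.range f := by
    intro q
    rw [← Submodule.Quotient.mk_eq_zero]
    show (LinearMap.range f).mkQ (π' (d10 q)) = 0
    rw [hπ', hdπ]; rfl
  let ef := LinearEquiv.ofInjective f hf
  let α : P.complex.X 1 →ₗ[R] X :=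
    (ef.symm : _ →ₗ[R] _) ∘ₗ LinearMap.codRestrict (LinearMap.range f) t ht
  have hα : ∀ q, f (α q) = t q := by
    intro q
    have h1 : ef (α q) = ⟨t q, ht q⟩ := ef.apply_symm_apply _
    have h2 : (ef (α q) : Y) = f (α q) := LinearEquiv.ofInjective_apply f (α q)
    rw [← h2, h1]
  let fc : P.complex.X 1 ⟶ S := ModuleCat.ofHom ((g : X →ₗ[R] S) ∘ₗ α)
  have hfc : P.complex.d 2 1 ≫ fc = 0 := by
    apply ModuleCat.hom_ext
    apply LinearMap.ext
    intro q
    have hd : d10 (P.complex.d 2 1 q) = 0 :=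
      congrArg (fun h => h.hom q) (P.complex.d_comp_d 2 1 0)
    have hz : α (P.complex.d 2 1 q) = 0 := by
      apply hf
      rw [hα, map_zero]
      show π' (d10 (P.complex.d 2 1 q)) = 0
      rw [hd, map_zero]
    show g (α (P.complex.d 2 1 q)) = 0
    rw [hz, map_zero]
  obtain ⟨hm, hhm⟩ := (bridge Z S P).1 (h Z) fc hfc
  let hm' : P.complex.X 0 →ₗ[R] S := hm.hom
  have hhm' : ∀ q, hm' (d10 q) = g (α q) := fun q =>
    congrArg (fun h => h.hom q) hhm
  let ψ : (P.complex.X 0 × X) →ₗ[R] Y := LinearMap.coprod π' f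
  have hψ : Function.Surjective ψ := by
    intro y
    obtain ⟨p, hp⟩ := hπ0 ((LinearMap.range f).mkQ y)
    have hy : y - π' p ∈ LinearMap.range f := by
      rw [← Submodule.Quotient.mk_eq_zero]
      show (LinearMap.range f).mkQ (y - π' p) = 0
      rw [map_sub, hπ' p, hp, sub_self]
    obtain ⟨x, hx⟩ := hy
    refine ⟨(p, x), ?_⟩
    show π' p + f x = y
    rw [hx]; abel
  let φ : (P.complex.X 0 × X) →ₗ[R] S := LinearMap.coprod hm' g
  have hker : LinearMap.ker ψ ≤ LinearMap.ker φ := by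
    rintro ⟨p, x⟩ hpx
    have hpx' : π' p + f x = 0 := hpx
    have hp0 : P.π.f 0 p = 0 := by
      rw [← hπ' p]
      have hval : π' p = -f x := by linear_combination (norm := abel) hpx'
      rw [hval, map_neg, show ((LinearMap.range f).mkQ (f x))
        = Submodule.Quotient.mk (f x) from rfl,
        (Submodule.Quotient.mk_eq_zero _).2 (LinearMap.mem_range_self f x), neg_zero]; rfl
    obtain ⟨q, hq⟩ := h0 p hp0
    have hq' : d10 q = p := hq
    have hx : x = -α q := by
      apply hf
      rw [map_neg, hα]
      show f x = -(π' (d10 q))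
      rw [hq']
      linear_combination (norm := abel) hpx'
    show hm' p + g x = 0
    rw [← hq', hhm' q, hx, map_neg, add_neg_cancel]
  let e2 := LinearMap.quotKerEquivOfSurjective ψ hψ
  let g' : Y →ₗ[R] S := Submodule.liftQ (LinearMap.ker ψ) φ hker ∘ₗ (e2.symm : Y →ₗ[R] _)
  refine ⟨g', fun x => ?_⟩
  have he : e2 (Submodule.Quotient.mk (0, x)) = f x := by
    show ψ (0, x) = f x
    show π' 0 + f x = f x
    rw [map_zero, zero_add]
  show Submodule.liftQ (LinearMap.ker ψ) φ hker (e2.symm (f x)) = g x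
  rw [← he, e2.symm_apply_apply]
  show hm' 0 + g x = g x
  rw [map_zero, zero_add]

end Aux

/- STATEMENT 15: every module `Z` satisfies `Ext¹(Z, S) = 0` for all simple `S` (every module
is coneat-flat) iff every simple module is injective (`R` is a V-ring). -/
theorem stmt15 (R : Type) [Ring R] :
    (∀ Z : ModuleCat.{0} R, ∀ S : ModuleCat.{0} R, IsSimpleModule R S →
      Subsingleton (ext1 Z S)) ↔
    (∀ S : ModuleCat.{0} R, IsSimpleModule R S → Module.Injective R S) := by
  constructor
  · intro h S hS
    exact dir_ext_to_inj S (fun Z => h Z S hS)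
  · intro h Z S hS
    exact dir_inj_to_ext S (h S hS) Z
end

section
/- Let R be a ring. Every simple right R-module is finitely presented if and only if every absolutely pure right R-module X satisfies Ext¹_R(S, X) = 0 for every simple right R-module S. -/
open CategoryTheory

section Bridge

variable {R : Type} [Ring R]

lemma isZero_iff_subsingleton (N : ModuleCat ℤ) : Limits.IsZero N ↔ Subsingleton N := by
  constructor
  · intro h
    refine ⟨fun a b => ?_⟩
    have h1 : (𝟙 N) = 0 := h.eq_of_src _ _
    have : ∀ x : N, x = 0 := by
      intro x
      calc x = (𝟙 N) x := rfl
      _ = (0 : N ⟶ N) x := by rw [h1]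
      _ = 0 := rfl
    rw [this a, this b]
  · intro h
    exact ModuleCat.isZero_of_subsingleton N

/-- Extension property: every map from `ker p` into `X` extends to `Q`. -/
def EP {Q M X : Type} [AddCommGroup Q] [Module R Q] [AddCommGroup M] [Module R M]
    [AddCommGroup X] [Module R X] (p : Q →ₗ[R] M) : Prop :=
  ∀ φ : (LinearMap.ker p) →ₗ[R] X, ∃ h : Q →ₗ[R] X, ∀ y : LinearMap.ker p, h y = φ y

lemma EP_transfer {Q P M X : Type} [AddCommGroup Q] [Module R Q] [AddCommGroup P] [Module R P]
    [AddCommGroup M] [Module R M] [AddCommGroup X] [Module R X]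
    (pP : P →ₗ[R] M) (pQ : Q →ₗ[R] M)
    (α : P →ₗ[R] Q) (hα : pQ.comp α = pP) (β : Q →ₗ[R] P) (hβ : pP.comp β = pQ)
    (h : EP (R := R) (X := X) pQ) : EP (R := R) (X := X) pP := by
  intro φ
  have hβk : ∀ y : LinearMap.ker pQ, β y ∈ LinearMap.ker pP := by
    intro y
    have : pP (β y) = pQ y := LinearMap.congr_fun hβ (y : Q)
    simp [LinearMap.mem_ker, this, y.2.out]
  let βk : (LinearMap.ker pQ) →ₗ[R] (LinearMap.ker pP) :=
    LinearMap.codRestrict _ (β.comp (LinearMap.ker pQ).subtype) hβk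
  obtain ⟨G, hG⟩ := h (φ.comp βk)
  have hτ : ∀ x : P, x - β (α x) ∈ LinearMap.ker pP := by
    intro x
    have h1 : pQ (α x) = pP x := LinearMap.congr_fun hα x
    have h2 : pP (β (α x)) = pQ (α x) := LinearMap.congr_fun hβ (α x)
    simp [LinearMap.mem_ker, h2, h1]
  let τ : P →ₗ[R] (LinearMap.ker pP) :=
    LinearMap.codRestrict _ (LinearMap.id - β.comp α) hτ
  refine ⟨(φ.comp τ) + G.comp α, fun y => ?_⟩
  have hαy : α y ∈ LinearMap.ker pQ := by
    have : pQ (α ↑y) = pP ↑y := LinearMap.congr_fun hα (y : P)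
    simp [LinearMap.mem_ker, this, y.2.out]
  have hGα : G (α y) = φ (βk ⟨α y, hαy⟩) := hG ⟨α y, hαy⟩
  have : τ y + βk ⟨α y, hαy⟩ = y := by
    apply Subtype.ext
    show ((y : P) - β (α y)) + β (α y) = y
    abel
  calc (φ.comp τ + G.comp α) y = φ (τ y) + G (α y) := rfl
  _ = φ (τ y) + φ (βk ⟨α y, hαy⟩) := by rw [hGα]
  _ = φ (τ y + βk ⟨α y, hαy⟩) := (map_add φ _ _).symm
  _ = φ y := by rw [this]

/-- The bridge: `Ext¹(M, X)` vanishes iff maps from the kernel of a projective presentation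
of `M` into `X` extend. -/
lemma subsingleton_ext1_iff_s17 (M X : ModuleCat.{0} R) {Q : Type} [AddCommGroup Q] [Module R Q]
    [hQ : Module.Projective R Q] (p : Q →ₗ[R] M) (hp : Function.Surjective p) :
    Subsingleton (ext1 M X) ↔ EP (R := R) (X := X) p := by
  classical
  obtain ⟨P⟩ : Nonempty (ProjectiveResolution M) := HasProjectiveResolution.out
  set C := P.complex with hC
  set ε : C.X 0 ⟶ M := P.π.f 0 with hε
  -- basic exactness facts
  have hεsurj : Function.Surjective ε := by
    rw [← ModuleCat.epi_iff_surjective]; exact inferInstanceAs (Epi (P.π.f 0))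
  have hd10ε : ∀ z : C.X 1, ε (C.d 1 0 z) = 0 := by
    intro z
    have h0 : (C.d 1 0 ≫ P.π.f 0) z = (0 : C.X 1 ⟶ M) z := by
      rw [P.complex_d_comp_π_f_zero]; rfl
    exact h0.trans rfl
  have hexact₀ : ∀ y : C.X 0, ε y = 0 → ∃ z, C.d 1 0 z = y := by
    intro y hy
    exact (ShortComplex.moduleCat_exact_iff _).mp P.exact₀ y hy
  have hexact₁ : ∀ y : C.X 1, C.d 1 0 y = 0 → ∃ z, C.d 2 1 z = y := by
    intro y hy
    exact (ShortComplex.moduleCat_exact_iff _).mp (P.exact_succ 0) y hy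
  have hd21 : ∀ z : C.X 2, C.d 1 0 (C.d 2 1 z) = 0 := by
    intro z
    have h0 : (C.d 2 1 ≫ C.d 1 0) z = (0 : C.X 2 ⟶ C.X 0) z := by
      rw [C.d_comp_d 2 1 0]
    exact h0.trans rfl
  -- step 1 : subsingleton iff exactness of the Hom complex at 1
  have step1 : Subsingleton (ext1 M X) ↔
      (∀ f : C.X 1 ⟶ X, (f.hom.comp (C.d 2 1).hom = 0) →
        ∃ g : C.X 0 ⟶ X, f.hom = g.hom.comp (C.d 1 0).hom) := by
    have e : (ext1 M X) ≅ (C.linearYonedaObj ℤ X).homology 1 := P.isoExt 1 X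
    have e2 : Subsingleton (ext1 M X) ↔
        Subsingleton ((C.linearYonedaObj ℤ X).homology 1) :=
      ((forget (ModuleCat ℤ)).mapIso e).toEquiv.subsingleton_congr
    rw [e2, ← isZero_iff_subsingleton, ← HomologicalComplex.exactAt_iff_isZero_homology,
      HomologicalComplex.exactAt_iff' _ 0 1 2 (by simp) (by simp),
      ShortComplex.moduleCat_exact_iff]
    constructor
    · intro h f hf
      obtain ⟨g, hg⟩ := h f (ModuleCat.hom_ext hf)
      exact ⟨g, congrArg ModuleCat.Hom.hom hg.symm⟩
    · intro h f hf
      obtain ⟨g, hg⟩ := h f (congrArg ModuleCat.Hom.hom hf)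
      exact ⟨g, (ModuleCat.hom_ext hg).symm⟩
  rw [step1]
  -- step 2 : exactness of the Hom complex at 1 iff EP ε
  have hd10k : ∀ z : C.X 1, C.d 1 0 z ∈ LinearMap.ker ε.hom := fun z => hd10ε z
  set π₁ : C.X 1 →ₗ[R] (LinearMap.ker ε.hom) :=
    LinearMap.codRestrict _ (C.d 1 0).hom hd10k with hπ₁
  have hπ₁surj : Function.Surjective π₁ := by
    rintro ⟨y, hy⟩
    obtain ⟨z, hz⟩ := hexact₀ y hy
    exact ⟨z, Subtype.ext hz⟩
  have step2 : (∀ f : C.X 1 ⟶ X, (f.hom.comp (C.d 2 1).hom = 0) →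
        ∃ g : C.X 0 ⟶ X, f.hom = g.hom.comp (C.d 1 0).hom) ↔
      EP (R := R) (X := X) ε.hom := by
    constructor
    · intro h φ
      have hf : ((φ.comp π₁).comp (C.d 2 1).hom) = 0 := by
        ext z
        have : π₁ (C.d 2 1 z) = 0 := Subtype.ext (hd21 z)
        simp only [LinearMap.comp_apply, this, map_zero, LinearMap.zero_apply]
      obtain ⟨g, hg⟩ := h (ModuleCat.ofHom (φ.comp π₁)) hf
      refine ⟨g.hom, fun y => ?_⟩
      obtain ⟨z, hz⟩ := hπ₁surj y
      have h1 : g ((y : C.X 0)) = g (C.d 1 0 z) := by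
        rw [show ((y : C.X 0)) = C.d 1 0 z from by rw [← hz]; rfl]
      rw [h1, show g (C.d 1 0 z) = (g.hom.comp (C.d 1 0).hom) z from rfl, ← hg]
      show φ (π₁ z) = φ y
      rw [hz]
    · intro h f hf
      -- f kills ker π₁
      have hker : LinearMap.ker π₁ ≤ LinearMap.ker f.hom := by
        intro y hy
        have hy' : C.d 1 0 y = 0 := congrArg Subtype.val hy.out
        obtain ⟨z, hz⟩ := hexact₁ y hy'
        have : f y = (f.hom.comp (C.d 2 1).hom) z := by rw [← hz]; rfl
        rw [LinearMap.mem_ker, this, hf]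
        rfl
      -- define φ on ker ε via the first isomorphism theorem
      set eq1 := π₁.quotKerEquivOfSurjective hπ₁surj with heq1
      set φ : (LinearMap.ker ε.hom) →ₗ[R] X :=
        ((LinearMap.ker π₁).liftQ f.hom hker).comp (eq1.symm : _ →ₗ[R] _) with hφ
      have hφπ : ∀ z : C.X 1, φ (π₁ z) = f z := by
        intro z
        have h1 : eq1 (Submodule.Quotient.mk z) = π₁ z := by
          rw [heq1, LinearMap.quotKerEquivOfSurjective, LinearEquiv.trans_apply,
            LinearEquiv.ofTop_apply, LinearMap.quotKerEquivRange_apply_mk]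
        have h2 : eq1.symm (π₁ z) = Submodule.Quotient.mk z := by
          rw [← h1, LinearEquiv.symm_apply_apply]
        rw [hφ]
        show ((LinearMap.ker π₁).liftQ f.hom hker) (eq1.symm (π₁ z)) = f z
        rw [h2]
        exact Submodule.liftQ_apply _ f.hom z
      obtain ⟨g, hg⟩ := h φ
      refine ⟨ModuleCat.ofHom g, ?_⟩
      ext z
      show f z = g (C.d 1 0 z)
      have : g (C.d 1 0 z) = φ ⟨C.d 1 0 z, hd10k z⟩ := hg ⟨C.d 1 0 z, hd10k z⟩
      rw [this, show (⟨C.d 1 0 z, hd10k z⟩ : LinearMap.ker ε.hom) = π₁ z from rfl,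
        hφπ]
  rw [step2]
  -- step 3 : transfer between the two presentations
  have hP0 : Module.Projective R (C.X 0) := by
    rw [IsProjective.iff_projective]
    exact P.projective 0
  obtain ⟨α, hα⟩ := Module.projective_lifting_property p ε.hom hp
  obtain ⟨β, hβ⟩ := Module.projective_lifting_property ε.hom p hεsurj
  constructor
  · intro h
    exact EP_transfer p ε.hom β hβ α hα h
  · intro h
    exact EP_transfer ε.hom p α hα β hβ h

end Bridge

section Main

variable {R : Type} [Ring R]

lemma simple_fp_of_absolutelyPure
    (Hyp : ∀ X : ModuleCat.{0} R, AbsolutelyPure X →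
      ∀ S : ModuleCat.{0} R, IsSimpleModule R S → Subsingleton (ext1 S X))
    (S : ModuleCat.{0} R) (hS : IsSimpleModule R S) : Module.FinitePresentation R S := by
  classical
  haveI : IsSimpleModule R S := hS
  haveI : Nontrivial S := IsSimpleModule.nontrivial R S
  obtain ⟨s, hs⟩ := exists_ne (0 : S)
  set p : R →ₗ[R] S := LinearMap.toSpanSingleton R S s with hpdef
  have hp : Function.Surjective p := IsSimpleModule.toSpanSingleton_surjective R hs
  by_contra hnfp
  have hKfg : ¬ (LinearMap.ker p).FG := fun h =>
    hnfp (Module.finitePresentation_of_surjective p hp h)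
  set K := LinearMap.ker p with hKdef
  -- the minimal cardinality of a generating set of K
  set Gen : Set Cardinal.{0} :=
    {c | ∃ t : Set K, Cardinal.mk t = c ∧ Submodule.span R t = (⊤ : Submodule R K)} with hGendef
  have hGen : Gen.Nonempty := ⟨_, Set.univ, rfl, Submodule.span_univ⟩
  set κ := sInf Gen with hκdef
  obtain ⟨t, htc, hts⟩ : κ ∈ Gen := csInf_mem hGen
  have hκinf : (Cardinal.aleph0 : Cardinal.{0}) ≤ κ := by
    by_contra hlt
    push_neg at hlt
    have htfin : (t : Set K).Finite := by
      rw [← Cardinal.lt_aleph0_iff_set_finite, htc]; exact hlt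
    have : (⊤ : Submodule R K).FG := Submodule.fg_def.mpr ⟨t, htfin, hts⟩
    exact hKfg ((Submodule.fg_top K).mp this)
  set ι := κ.ord.ToType with hιdef
  have hmkι : Cardinal.mk ι = κ := by rw [hιdef, Cardinal.mk_toType, Cardinal.card_ord]
  haveI hιne : Nonempty ι := by
    rw [← Cardinal.mk_ne_zero_iff, hmkι]
    exact (Cardinal.aleph0_pos.trans_le hκinf).ne'
  haveI : NoMaxOrder ι := Cardinal.noMaxOrder hκinf
  obtain ⟨e⟩ : Nonempty (ι ≃ t) := Cardinal.eq.mp (by rw [hmkι, htc])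
  set x : ι → K := fun β => ((e β : t) : K) with hxdef
  set m : ι → Submodule R K := fun α => Submodule.span R (x '' Set.Iio α) with hmdef
  have hmono : Monotone m := fun a a' h =>
    Submodule.span_mono (Set.image_mono (Set.Iio_subset_Iio h))
  have hproper : ∀ α, m α ≠ ⊤ := by
    intro α htop
    have h1 : Cardinal.mk (x '' Set.Iio α) < κ :=
      lt_of_le_of_lt Cardinal.mk_image_le (Cardinal.mk_Iio_ord_toType α)
    have h2 : κ ≤ Cardinal.mk (x '' Set.Iio α) :=
      csInf_le (OrderBot.bddBelow _) ⟨x '' Set.Iio α, rfl, htop⟩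
    exact absurd (h2.trans_lt h1) (lt_irrefl κ)
  have hcover : ∀ a : K, ∃ α, a ∈ m α := by
    intro a
    have hsub : Submodule.span R (Set.range x) ≤ ⨆ α, m α := by
      rw [Submodule.span_le]
      rintro _ ⟨β, rfl⟩
      obtain ⟨γ, hγ⟩ := exists_gt β
      exact Submodule.mem_iSup_of_mem γ
        (Submodule.subset_span (Set.mem_image_of_mem x hγ))
    have hrange : Set.range x = (t : Set K) := by
      rw [hxdef]
      ext a
      constructor
      · rintro ⟨β, rfl⟩; exact (e β).2
      · intro ha; exact ⟨e.symm ⟨a, ha⟩, by simp⟩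
    have htop : a ∈ Submodule.span R (Set.range x) := by
      rw [hrange, hts]; trivial
    have := hsub htop
    rwa [Submodule.mem_iSup_of_directed _ (hmono.directed_le)] at this
  -- injective modules containing the quotients K / m α
  set Qm : ι → ModuleCat.{0} R := fun α => ModuleCat.of R (K ⧸ m α) with hQmdef
  set E : ι → ModuleCat.{0} R := fun α => Injective.under (Qm α) with hEdef
  have hEinj : ∀ α, Function.Injective (Injective.ι (Qm α)) := fun α =>
    (ModuleCat.mono_iff_injective _).mp inferInstance
  -- the submodule of the product consisting of small-support elements
  set PI := (∀ α : ι, (E α : Type)) with hPIdef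
  set supp : PI → Set ι := fun ξ => {α | ξ α ≠ 0} with hsuppdef
  have hsupp_add : ∀ ξ η : PI, supp (ξ + η) ⊆ supp ξ ∪ supp η := by
    intro ξ η α hα
    by_cases h1 : ξ α = 0
    · by_cases h2 : η α = 0
      · exact absurd (show ξ α + η α = 0 by rw [h1, h2, add_zero]) hα
      · exact Or.inr h2
    · exact Or.inl h1
  set X0 : Submodule R PI :=
    { carrier := {ξ | Cardinal.mk (supp ξ) < κ}
      add_mem' := by
        intro ξ η hξ hη
        refine lt_of_le_of_lt ((Cardinal.mk_le_mk_of_subset (hsupp_add ξ η)).trans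
          (Cardinal.mk_union_le _ _)) ?_
        exact Cardinal.add_lt_of_lt hκinf hξ hη
      zero_mem' := by
        have hz : supp (0 : PI) = ∅ := by
          ext α
          simp only [hsuppdef, ne_eq, Set.mem_setOf_eq, Set.mem_empty_iff_false, iff_false,
            not_not]
          rfl
        show Cardinal.mk (supp (0 : PI)) < κ
        rw [hz]
        simpa using Cardinal.aleph0_pos.trans_le hκinf
      smul_mem' := by
        intro r ξ hξ
        refine lt_of_le_of_lt (Cardinal.mk_le_mk_of_subset ?_) hξ
        intro α hα
        by_contra h
        have : ξ α = 0 := not_not.mp h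
        exact hα (by show r • ξ α = 0; rw [this, smul_zero]) } with hX0def
  set X' : ModuleCat.{0} R := ModuleCat.of R X0 with hX'def
  -- X' is absolutely pure
  have hX'AP : AbsolutelyPure X' := by
    intro F hF
    haveI : Module.FinitePresentation R F := hF
    obtain ⟨n, q, hq⟩ := Module.Finite.exists_fin' R F
    haveI : Module.Projective R (Fin n → R) :=
      Module.Projective.of_basis (Pi.basisFun R (Fin n))
    have hfg : (LinearMap.ker q).FG := Module.FinitePresentation.fg_ker q hq
    haveI : Module.Finite R (LinearMap.ker q) := Module.Finite.iff_fg.mpr hfg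
    rw [subsingleton_ext1_iff_s17 F X' q hq]
    intro φ
    obtain ⟨T, hT⟩ := Module.Finite.fg_top (R := R) (M := LinearMap.ker q)
    -- the union of the supports of the images of the generators
    set s : Set ι := ⋃ y ∈ T, supp ((φ y).1 : PI) with hsdef
    have hscard : Cardinal.mk s < κ := by
      have key : ∀ u : Finset (LinearMap.ker q),
          Cardinal.mk (⋃ y ∈ u, supp ((φ y).1 : PI)) < κ := by
        intro u
        induction u using Finset.induction with
        | empty =>
          simp only [Finset.notMem_empty, Set.iUnion_of_empty, Set.iUnion_empty]
          simpa using Cardinal.aleph0_pos.trans_le hκinf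
        | @insert a u ha ih =>
          have : (⋃ y ∈ insert a u, supp ((φ y).1 : PI)) =
              supp ((φ a).1 : PI) ∪ ⋃ y ∈ u, supp ((φ y).1 : PI) := by
            simp [Set.biUnion_insert]
          rw [this]
          refine lt_of_le_of_lt (Cardinal.mk_union_le _ _) ?_
          exact Cardinal.add_lt_of_lt hκinf (φ a).2 ih
      exact key T
    -- coordinates outside s vanish on all of ker q
    have hvanish : ∀ (y : LinearMap.ker q) (α : ι), α ∉ s → ((φ y).1 : PI) α = 0 := by
      have main : ∀ y : LinearMap.ker q, y ∈ Submodule.span R (T : Set (LinearMap.ker q)) →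
          ∀ α, α ∉ s → ((φ y).1 : PI) α = 0 := by
        intro y hy
        refine Submodule.span_induction ?_ ?_ ?_ ?_ hy
        · intro z hz α hα
          by_contra hne
          exact hα (Set.mem_biUnion hz hne)
        · intro α _
          rw [map_zero]
          rfl
        · intro y z _ _ hy hz α hα
          have : ((φ (y + z)).1 : PI) α = ((φ y).1 : PI) α + ((φ z).1 : PI) α := by
            rw [map_add]; rfl
          rw [this, hy α hα, hz α hα, add_zero]
        · intro r y _ hy α hα
          have : ((φ (r • y)).1 : PI) α = r • ((φ y).1 : PI) α := by
            rw [map_smul]; rfl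
          rw [this, hy α hα, smul_zero]
      intro y α hα
      exact main y (by rw [hT]; trivial) α hα
    -- build the extension coordinatewise using injectivity
    set cem : ModuleCat.of R (LinearMap.ker q) ⟶ ModuleCat.of R (Fin n → R) :=
      ModuleCat.ofHom (LinearMap.ker q).subtype with hcemdef
    haveI : Mono cem := (ModuleCat.mono_iff_injective _).mpr Subtype.val_injective
    set φc : ∀ α : ι, (ModuleCat.of R (LinearMap.ker q) ⟶ E α) := fun α =>
      ModuleCat.ofHom ((LinearMap.proj α).comp (X0.subtype.comp φ)) with hφcdef
    set hcoord : ∀ α : ι, (ModuleCat.of R (Fin n → R) ⟶ E α) := fun α =>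
      if α ∈ s then Injective.factorThru (φc α) cem else 0 with hcoorddef
    set htot : (Fin n → R) →ₗ[R] PI := LinearMap.pi (fun α => (hcoord α).hom)
      with htotdef
    have hland : ∀ v : Fin n → R, htot v ∈ X0 := by
      intro v
      have : supp (htot v) ⊆ s := by
        intro α hα
        by_contra h
        apply hα
        show htot v α = 0
        have : hcoord α = 0 := by rw [hcoorddef]; simp [h]
        show (hcoord α) v = 0
        rw [this]
        rfl
      exact lt_of_le_of_lt (Cardinal.mk_le_mk_of_subset this) hscard
    refine ⟨LinearMap.codRestrict X0 htot hland, fun y => ?_⟩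
    apply Subtype.ext
    funext α
    show htot (y : Fin n → R) α = ((φ y).1 : PI) α
    by_cases hαs : α ∈ s
    · have h1 : hcoord α = Injective.factorThru (φc α) cem := by
        rw [hcoorddef]; simp [hαs]
      show (hcoord α) (y : Fin n → R) = ((φ y).1 : PI) α
      rw [h1]
      have h2 : (cem ≫ Injective.factorThru (φc α) cem) y = (φc α) y :=
        congrArg (fun f => f.hom y) (Injective.comp_factorThru (φc α) cem)
      exact h2
    · have h1 : hcoord α = 0 := by rw [hcoorddef]; simp [hαs]
      show (hcoord α) (y : Fin n → R) = ((φ y).1 : PI) α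
      rw [h1, hvanish y α hαs]
      rfl
  -- apply the hypothesis to X'
  have hsub := Hyp X' hX'AP S hS
  rw [subsingleton_ext1_iff_s17 S X' p hp] at hsub
  -- the canonical map K → X0
  set gbase : K →ₗ[R] PI :=
    LinearMap.pi (fun α => (Injective.ι (Qm α)).hom.comp (m α).mkQ) with hgdef
  have hgcoord : ∀ (a : K) (α : ι),
      gbase a α = (Injective.ι (Qm α)).hom (Submodule.Quotient.mk a) := by
    intro a α; rfl
  have hgland : ∀ a : K, gbase a ∈ X0 := by
    intro a
    obtain ⟨α₀, hα₀⟩ := hcover a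
    have hsub2 : supp (gbase a) ⊆ Set.Iio α₀ := by
      intro α hα
      by_contra h
      apply hα
      have hle : α₀ ≤ α := not_lt.mp h
      have : a ∈ m α := hmono hle hα₀
      show gbase a α = 0
      rw [hgcoord]
      have : (Submodule.Quotient.mk a : K ⧸ m α) = 0 := (Submodule.Quotient.mk_eq_zero _).mpr this
      rw [this, map_zero]
    exact lt_of_le_of_lt (Cardinal.mk_le_mk_of_subset hsub2) (Cardinal.mk_Iio_ord_toType α₀)
  obtain ⟨h, hh⟩ := hsub (LinearMap.codRestrict X0 gbase hgland)
  set xx : X0 := (h 1 : X0) with hxxdef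
  have hxx : ∀ y : K, gbase y = (y : R) • (xx.1 : PI) := by
    intro y
    have h1 : h ((y : R)) = (y : R) • h 1 := by
      have h2 := map_smul h (y : R) (1 : R)
      rwa [smul_eq_mul, mul_one] at h2
    have h2 : h (y : R) = LinearMap.codRestrict X0 gbase hgland y := hh y
    have h3 : (LinearMap.codRestrict X0 gbase hgland y).1 = gbase y := rfl
    have h4 := congrArg Subtype.val (h2.symm.trans h1)
    rw [h3] at h4
    exact h4
  -- find a coordinate outside the support of xx
  have hex : ∃ α, α ∉ supp xx.1 := by
    by_contra hcon
    push_neg at hcon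
    have huniv : supp xx.1 = Set.univ := Set.eq_univ_of_forall hcon
    have h5 : Cardinal.mk (supp xx.1) < κ := xx.2
    have h6 : Cardinal.mk (supp xx.1) = κ := by rw [huniv, Cardinal.mk_univ, hmkι]
    rw [h6] at h5
    exact lt_irrefl κ h5
  obtain ⟨αs, hαs⟩ := hex
  have hxval : (xx.1 : PI) αs = 0 := not_not.mp hαs
  have hall : ∀ a : K, a ∈ m αs := by
    intro a
    have h1 : gbase a αs = 0 := by
      calc gbase a αs = ((a : R) • (xx.1 : PI)) αs := by rw [hxx a]
      _ = (a : R) • ((xx.1 : PI) αs) := rfl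
      _ = 0 := by rw [hxval, smul_zero]
    rw [hgcoord] at h1
    have h2 : (Submodule.Quotient.mk a : K ⧸ m αs) = 0 := by
      apply hEinj αs
      rw [map_zero]
      exact h1
    exact (Submodule.Quotient.mk_eq_zero _).mp h2
  exact hproper αs (Submodule.eq_top_iff'.mpr hall)

end Main

/- STATEMENT 17: every simple module is finitely presented iff every absolutely pure module
`X` satisfies `Ext¹(S, X) = 0` for every simple module `S`. -/
theorem stmt17 (R : Type) [Ring R] :
    (∀ S : ModuleCat.{0} R, IsSimpleModule R S → Module.FinitePresentation R S) ↔
    (∀ X : ModuleCat.{0} R, AbsolutelyPure X →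
      ∀ S : ModuleCat.{0} R, IsSimpleModule R S →
        Subsingleton (ext1 S X)) := by
  constructor
  · intro h X hX S hS
    exact hX S (h S hS)
  · intro h S hS
    exact simple_fp_of_absolutelyPure h S hS
end

section
/- Let R be a ring. The following are equivalent: (i) every simple right R-module embeds into R (R is right Kasch); (ii) for every injective right R-module X and every simple right R-module S, every homomorphism S → X factors through a projective right R-module; (iii) for each simple right R-module S, the inclusion of S into its injective envelope factors through a projective module. -/
open CategoryTheory

/- STATEMENT 18: TFAE: (i) every simple module embeds into `R` (right Kasch);
(ii) every homomorphism from a simple module into an injective module factors through a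
projective module; (iii) for each simple `S`, every embedding of `S` into an injective module
(in particular its injective envelope) factors through a projective module. -/
theorem stmt18 (R : Type) [Ring R] :
    List.TFAE
      [∀ S : ModuleCat.{0} R, IsSimpleModule R S →
          ∃ ι : S →ₗ[R] R, Function.Injective ι,
       ∀ X : ModuleCat.{0} R, Module.Injective R X →
          ∀ S : ModuleCat.{0} R, IsSimpleModule R S →
            ∀ f : S →ₗ[R] X, FactorsThroughProjective f,
       ∀ S : ModuleCat.{0} R, IsSimpleModule R S →
          ∀ E : ModuleCat.{0} R, Module.Injective R E →
            ∀ ι : S →ₗ[R] E, Function.Injective ι → FactorsThroughProjective ι] := by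
  tfae_have 1 → 2
  · intro h1 X hX S hS f
    obtain ⟨ι, hι⟩ := h1 S hS
    obtain ⟨β, hβ⟩ := hX.out ι hι f
    exact ⟨ModuleCat.of R R, inferInstanceAs (Module.Projective R R), ι, β, LinearMap.ext hβ⟩
  tfae_have 2 → 3
  · intro h2 S hS E hE ι hι
    exact h2 E hE S hS ι
  tfae_have 3 → 1
  · intro h3 S hS
    -- use the injective envelope from enough injectives
    let E : ModuleCat.{0} R := Injective.under S
    haveI : CategoryTheory.Injective (ModuleCat.of R E) := by
      show CategoryTheory.Injective E
      infer_instance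
    have hE : Module.Injective R E := Module.injective_module_of_injective_object R E
    have hmono : Function.Injective ((Injective.ι S).hom : S →ₗ[R] E) :=
      (ModuleCat.mono_iff_injective (Injective.ι S)).mp inferInstance
    obtain ⟨P, hP, α, β, hβα⟩ := h3 S hS E hE (Injective.ι S).hom hmono
    have hα : Function.Injective α := by
      have : Function.Injective (β.comp α) := hβα ▸ hmono
      exact Function.Injective.of_comp this
    obtain ⟨s, hs⟩ := (Module.projective_def).mp hP
    have hsinj : Function.Injective s := hs.injective
    set g : S →ₗ[R] (P →₀ R) := s.comp α with hg
    have hginj : Function.Injective g := hsinj.comp hα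
    haveI : Nontrivial S := IsSimpleModule.nontrivial R S
    obtain ⟨x, hx⟩ := exists_ne (0 : S)
    have hgx : g x ≠ 0 := fun h => hx (hginj (by simpa using h))
    obtain ⟨p, hp⟩ := Finsupp.ne_iff.mp hgx
    simp only [Finsupp.coe_zero, Pi.zero_apply] at hp
    refine ⟨(Finsupp.lapply p).comp g, ?_⟩
    have hker : LinearMap.ker ((Finsupp.lapply p).comp g) ≠ ⊤ := by
      intro h
      have : x ∈ LinearMap.ker ((Finsupp.lapply (R := R) p).comp g) := h ▸ trivial
      exact hp (by simpa using this)
    rw [← LinearMap.ker_eq_bot]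
    exact (eq_bot_or_eq_top _).resolve_right hker
  tfae_finish
end
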